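/- arXiv:0912.3159 — 2 statements merged into one kernel-verified Lean document; each statement's English description precedes it below -/
import Mathlib

section
/- Let H be a braided bialgebra over a field k with braid c, let (A,s) be a left H-braided module algebra with action ρ, and let F ∈ H⊗H be a twisting element such that (s⊗H)∘(H⊗s)(F⊗a) = a⊗F for all a ∈ A. Then A_F, the vector space A equipped with the multiplication μ_A∘F_l, where F_l(a⊗b) := (ρ⊗ρ)∘(H⊗s⊗A)(F⊗a⊗b), is an associative k-algebra with unit 1_A. -/
open TensorProduct

noncomputable section
namespace Paper

variable {k : Type*} [Field k]

section Combinators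

variable {M N P Q M' N' P' M'' : Type*}
  [AddCommMonoid M] [AddCommMonoid N] [AddCommMonoid P] [AddCommMonoid Q]
  [AddCommMonoid M'] [AddCommMonoid N'] [AddCommMonoid P'] [AddCommMonoid M'']
  [Module k M] [Module k N] [Module k P] [Module k Q]
  [Module k M'] [Module k N'] [Module k P'] [Module k M'']

/-- `(s ⊗ id) ∘ (id ⊗ s)` : braid a pair of factors past `P`. -/
def braidPast (f : N ⊗[k] P →ₗ[k] P ⊗[k] N') (g : M ⊗[k] P →ₗ[k] P ⊗[k] M') :
    (M ⊗[k] N) ⊗[k] P →ₗ[k] P ⊗[k] (M' ⊗[k] N') :=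
  (TensorProduct.assoc k P M' N').toLinearMap
    ∘ₗ g.rTensor N'
    ∘ₗ (TensorProduct.assoc k M P N').symm.toLinearMap
    ∘ₗ f.lTensor M
    ∘ₗ (TensorProduct.assoc k M N P).toLinearMap

def braidUnder (f : M ⊗[k] N →ₗ[k] N' ⊗[k] M') (g : M' ⊗[k] P →ₗ[k] P' ⊗[k] M'') :
    M ⊗[k] (N ⊗[k] P) →ₗ[k] (N' ⊗[k] P') ⊗[k] M'' :=
  (TensorProduct.assoc k N' P' M'').symm.toLinearMap
    ∘ₗ g.lTensor N'
    ∘ₗ (TensorProduct.assoc k N' M' P).toLinearMap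
    ∘ₗ f.rTensor P
    ∘ₗ (TensorProduct.assoc k M N P).symm.toLinearMap

def midMap (f : N ⊗[k] P →ₗ[k] P' ⊗[k] N') :
    (M ⊗[k] N) ⊗[k] (P ⊗[k] Q) →ₗ[k] (M ⊗[k] P') ⊗[k] (N' ⊗[k] Q) :=
  (TensorProduct.assoc k M P' (N' ⊗[k] Q)).symm.toLinearMap
    ∘ₗ ((TensorProduct.assoc k P' N' Q).toLinearMap.lTensor M)
    ∘ₗ ((f.rTensor Q).lTensor M)
    ∘ₗ ((TensorProduct.assoc k N P Q).symm.toLinearMap.lTensor M)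
    ∘ₗ (TensorProduct.assoc k M N (P ⊗[k] Q)).toLinearMap

end Combinators

section Braided

variable (k)
variable (H : Type*) [Ring H] [Algebra k H]

/-- `(H, comul, counit, c)` is a braided bialgebra. -/
structure IsBraidedBialgebra (comul : H →ₗ[k] H ⊗[k] H) (counit : H →ₗ[k] k)
    (c : H ⊗[k] H ≃ₗ[k] H ⊗[k] H) : Prop where
  coassoc : (TensorProduct.assoc k H H H).toLinearMap ∘ₗ comul.rTensor H ∘ₗ comul
      = comul.lTensor H ∘ₗ comul
  counit_left : (TensorProduct.lid k H).toLinearMap ∘ₗ counit.rTensor H ∘ₗ comul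
      = LinearMap.id
  counit_right : (TensorProduct.rid k H).toLinearMap ∘ₗ counit.lTensor H ∘ₗ comul
      = LinearMap.id
  braid_eq :
      c.toLinearMap.rTensor H
          ∘ₗ ((TensorProduct.assoc k H H H).symm.toLinearMap
              ∘ₗ c.toLinearMap.lTensor H ∘ₗ (TensorProduct.assoc k H H H).toLinearMap)
          ∘ₗ c.toLinearMap.rTensor H
        = ((TensorProduct.assoc k H H H).symm.toLinearMap
              ∘ₗ c.toLinearMap.lTensor H ∘ₗ (TensorProduct.assoc k H H H).toLinearMap)
          ∘ₗ c.toLinearMap.rTensor H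
          ∘ₗ ((TensorProduct.assoc k H H H).symm.toLinearMap
              ∘ₗ c.toLinearMap.lTensor H ∘ₗ (TensorProduct.assoc k H H H).toLinearMap)
  c_one_left : ∀ h : H, c ((1 : H) ⊗ₜ[k] h) = h ⊗ₜ[k] (1 : H)
  c_mul_left : c.toLinearMap ∘ₗ (LinearMap.mul' k H).rTensor H
      = (LinearMap.mul' k H).lTensor H ∘ₗ braidPast c.toLinearMap c.toLinearMap
  c_one_right : ∀ h : H, c (h ⊗ₜ[k] (1 : H)) = (1 : H) ⊗ₜ[k] h
  c_mul_right : c.toLinearMap ∘ₗ (LinearMap.mul' k H).lTensor H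
      = (LinearMap.mul' k H).rTensor H ∘ₗ braidUnder c.toLinearMap c.toLinearMap
  c_counit_left : (TensorProduct.rid k H).toLinearMap ∘ₗ counit.lTensor H ∘ₗ c.toLinearMap
      = (TensorProduct.lid k H).toLinearMap ∘ₗ counit.rTensor H
  c_comul_left : comul.lTensor H ∘ₗ c.toLinearMap
      = braidPast c.toLinearMap c.toLinearMap ∘ₗ comul.rTensor H
  c_counit_right : (TensorProduct.lid k H).toLinearMap ∘ₗ counit.rTensor H ∘ₗ c.toLinearMap
      = (TensorProduct.rid k H).toLinearMap ∘ₗ counit.lTensor H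
  c_comul_right : comul.rTensor H ∘ₗ c.toLinearMap
      = braidUnder c.toLinearMap c.toLinearMap ∘ₗ comul.lTensor H
  comul_mul : comul ∘ₗ LinearMap.mul' k H
      = TensorProduct.map (LinearMap.mul' k H) (LinearMap.mul' k H)
          ∘ₗ midMap c.toLinearMap ∘ₗ TensorProduct.map comul comul
  comul_one : comul 1 = (1 : H) ⊗ₜ[k] (1 : H)
  counit_mul : ∀ x y : H, counit (x * y) = counit x * counit y
  counit_one : counit 1 = 1

variable (A : Type*) [Ring A] [Algebra k A]

/-- `s` is a left transposition of the braided bialgebra `(H, comul, counit, c)` on `A`. -/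
structure IsBrTransposition (comul : H →ₗ[k] H ⊗[k] H) (counit : H →ₗ[k] k)
    (c : H ⊗[k] H ≃ₗ[k] H ⊗[k] H) (s : H ⊗[k] A ≃ₗ[k] A ⊗[k] H) : Prop where
  unit_H : ∀ a : A, s ((1 : H) ⊗ₜ[k] a) = a ⊗ₜ[k] (1 : H)
  mul_H : s.toLinearMap ∘ₗ (LinearMap.mul' k H).rTensor A
      = (LinearMap.mul' k H).lTensor A ∘ₗ braidPast s.toLinearMap s.toLinearMap
  counit_compat : (TensorProduct.rid k A).toLinearMap ∘ₗ counit.lTensor A ∘ₗ s.toLinearMap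
      = (TensorProduct.lid k A).toLinearMap ∘ₗ counit.rTensor A
  comul_compat : comul.lTensor A ∘ₗ s.toLinearMap
      = braidPast s.toLinearMap s.toLinearMap ∘ₗ comul.rTensor A
  unit_A : ∀ h : H, s (h ⊗ₜ[k] (1 : A)) = (1 : A) ⊗ₜ[k] h
  mul_A : s.toLinearMap ∘ₗ (LinearMap.mul' k A).lTensor H
      = (LinearMap.mul' k A).rTensor H ∘ₗ braidUnder s.toLinearMap s.toLinearMap
  braid_compat : braidPast s.toLinearMap s.toLinearMap ∘ₗ c.toLinearMap.rTensor A
      = c.toLinearMap.lTensor A ∘ₗ braidPast s.toLinearMap s.toLinearMap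

/-- The action `H ⊗ A → A` attached to an algebra morphism `H →ₐ Module.End k A`. -/
def brActMap (ρ : H →ₐ[k] Module.End k A) : H ⊗[k] A →ₗ[k] A :=
  TensorProduct.lift ρ.toLinearMap

/-- `(A, s)` is a left `H`-braided module algebra via `ρ`. -/
structure IsBrModuleAlgebra (comul : H →ₗ[k] H ⊗[k] H) (counit : H →ₗ[k] k)
    (c : H ⊗[k] H ≃ₗ[k] H ⊗[k] H) (s : H ⊗[k] A ≃ₗ[k] A ⊗[k] H)
    (ρ : H →ₐ[k] Module.End k A) : Prop where
  compat_s : s.toLinearMap ∘ₗ (brActMap k H A ρ).lTensor H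
        ∘ₗ (TensorProduct.assoc k H H A).toLinearMap
      = (brActMap k H A ρ).rTensor H
        ∘ₗ (TensorProduct.assoc k H A H).symm.toLinearMap
        ∘ₗ s.toLinearMap.lTensor H
        ∘ₗ (TensorProduct.assoc k H H A).toLinearMap
        ∘ₗ c.toLinearMap.rTensor A
  mul_act : ∀ (h : H) (a b : A), ρ h (a * b)
      = (LinearMap.mul' k A
          ∘ₗ TensorProduct.map (brActMap k H A ρ) (brActMap k H A ρ)
          ∘ₗ midMap s.toLinearMap)
        ((comul h) ⊗ₜ[k] (a ⊗ₜ[k] b))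
  one_act : ∀ h : H, ρ h (1 : A) = counit h • (1 : A)

variable {A}

/-- The multiplication of the twisted tensor product algebra `H ⊗_c H`. -/
def mulB (c : H ⊗[k] H ≃ₗ[k] H ⊗[k] H) :
    (H ⊗[k] H) ⊗[k] (H ⊗[k] H) →ₗ[k] H ⊗[k] H :=
  TensorProduct.map (LinearMap.mul' k H) (LinearMap.mul' k H) ∘ₗ midMap c.toLinearMap

/-- The multiplication of the twisted triple tensor product algebra `H ⊗_c H ⊗_c H`. -/
def mulC (c : H ⊗[k] H ≃ₗ[k] H ⊗[k] H) :
    (H ⊗[k] (H ⊗[k] H)) ⊗[k] (H ⊗[k] (H ⊗[k] H)) →ₗ[k] H ⊗[k] (H ⊗[k] H) :=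
  TensorProduct.map (LinearMap.mul' k H) (mulB k H c)
    ∘ₗ midMap (braidPast c.toLinearMap c.toLinearMap)

/-- `F ∈ H ⊗ H` is a twisting element based on the braided bialgebra
`(H, comul, counit, c)`. -/
def IsTwistingElement (comul : H →ₗ[k] H ⊗[k] H) (counit : H →ₗ[k] k)
    (c : H ⊗[k] H ≃ₗ[k] H ⊗[k] H) (F : H ⊗[k] H) : Prop :=
  (TensorProduct.lid k H) (counit.rTensor H F) = 1
  ∧ (TensorProduct.rid k H) (counit.lTensor H F) = 1
  ∧ mulC k H c
      (((TensorProduct.assoc k H H H) (comul.rTensor H F))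
        ⊗ₜ[k] ((TensorProduct.assoc k H H H) (F ⊗ₜ[k] (1 : H))))
    = mulC k H c ((comul.lTensor H F) ⊗ₜ[k] ((1 : H) ⊗ₜ[k] F))
  ∧ ∀ h : H, braidPast c.toLinearMap c.toLinearMap (F ⊗ₜ[k] h) = h ⊗ₜ[k] F

end Braided

end Paper
namespace Paper

section Aux0

variable {k : Type*} [Field k]
variable {M N P Q M' N' P' M'' : Type*}
  [AddCommMonoid M] [AddCommMonoid N] [AddCommMonoid P] [AddCommMonoid Q]
  [AddCommMonoid M'] [AddCommMonoid N'] [AddCommMonoid P'] [AddCommMonoid M'']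
  [Module k M] [Module k N] [Module k P] [Module k Q]
  [Module k M'] [Module k N'] [Module k P'] [Module k M'']

lemma braidPast_tmul (f : N ⊗[k] P →ₗ[k] P ⊗[k] N') (g : M ⊗[k] P →ₗ[k] P ⊗[k] M')
    (m : M) (n : N) (p : P) :
    braidPast f g ((m ⊗ₜ[k] n) ⊗ₜ[k] p)
      = (TensorProduct.assoc k P M' N') (g.rTensor N'
          ((TensorProduct.assoc k M P N').symm (m ⊗ₜ[k] f (n ⊗ₜ[k] p)))) := by
  simp [braidPast]

lemma braidUnder_tmul (f : M ⊗[k] N →ₗ[k] N' ⊗[k] M') (g : M' ⊗[k] P →ₗ[k] P' ⊗[k] M'')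
    (m : M) (n : N) (p : P) :
    braidUnder f g (m ⊗ₜ[k] (n ⊗ₜ[k] p))
      = (TensorProduct.assoc k N' P' M'').symm (g.lTensor N'
          ((TensorProduct.assoc k N' M' P) (f (m ⊗ₜ[k] n) ⊗ₜ[k] p))) := by
  simp [braidUnder]

lemma midMap_tmul (f : N ⊗[k] P →ₗ[k] P' ⊗[k] N') (m : M) (n : N) (p : P) (q : Q) :
    midMap f ((m ⊗ₜ[k] n) ⊗ₜ[k] (p ⊗ₜ[k] q))
      = (TensorProduct.assoc k M P' (N' ⊗[k] Q)).symm
          (m ⊗ₜ[k] (TensorProduct.assoc k P' N' Q) (f (n ⊗ₜ[k] p) ⊗ₜ[k] q)) := by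
  simp [midMap]

end Aux0

end Paper
namespace Paper

section Aux1

set_option synthInstance.maxHeartbeats 400000
set_option maxHeartbeats 1600000

variable {k : Type*} [Field k]
variable {H : Type*} [Ring H] [Algebra k H]
variable {A : Type*} [Ring A] [Algebra k A]
variable (comul : H →ₗ[k] H ⊗[k] H) (counit : H →ₗ[k] k)
variable (c : H ⊗[k] H ≃ₗ[k] H ⊗[k] H) (s : H ⊗[k] A ≃ₗ[k] A ⊗[k] H)
variable (ρ : H →ₐ[k] Module.End k A)

/-- The action of `H ⊗ H` on `A ⊗ A`. -/
def act2 : (H ⊗[k] H) ⊗[k] (A ⊗[k] A) →ₗ[k] A ⊗[k] A :=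
  TensorProduct.map (brActMap k H A ρ) (brActMap k H A ρ) ∘ₗ midMap s.toLinearMap

/-- The action of `H ⊗ (H ⊗ H)` on `A ⊗ (A ⊗ A)`. -/
def act3 : (H ⊗[k] (H ⊗[k] H)) ⊗[k] (A ⊗[k] (A ⊗[k] A)) →ₗ[k] A ⊗[k] (A ⊗[k] A) :=
  TensorProduct.map (brActMap k H A ρ) (act2 s ρ)
    ∘ₗ midMap (braidPast s.toLinearMap s.toLinearMap)

/-- Triple multiplication `A ⊗ (A ⊗ A) → A`. -/
def mu3 : A ⊗[k] (A ⊗[k] A) →ₗ[k] A :=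
  LinearMap.mul' k A ∘ₗ (LinearMap.mul' k A).lTensor A

@[simp] lemma brActMap_tmul (h : H) (a : A) : brActMap k H A ρ (h ⊗ₜ[k] a) = ρ h a := rfl

@[simp] lemma mu3_tmul (a b d : A) : mu3 (a ⊗ₜ[k] (b ⊗ₜ[k] d)) = a * (b * d) := by
  simp [mu3]

variable {comul counit c s ρ}

lemma s_mul_H' (hs : IsBrTransposition k H A comul counit c s) (y : H ⊗[k] H) (a : A) :
    s (LinearMap.mul' k H y ⊗ₜ[k] a)
      = (LinearMap.mul' k H).lTensor A
          (braidPast s.toLinearMap s.toLinearMap (y ⊗ₜ[k] a)) := by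
  have := LinearMap.congr_fun hs.mul_H (y ⊗ₜ[k] a)
  simpa using this

lemma s_mul_A' (hs : IsBrTransposition k H A comul counit c s) (h : H) (w : A ⊗[k] A) :
    s (h ⊗ₜ[k] LinearMap.mul' k A w)
      = (LinearMap.mul' k A).rTensor H
          (braidUnder s.toLinearMap s.toLinearMap (h ⊗ₜ[k] w)) := by
  have := LinearMap.congr_fun hs.mul_A (h ⊗ₜ[k] w)
  simpa using this

lemma braid_compat' (hs : IsBrTransposition k H A comul counit c s) (z : H ⊗[k] H) (a : A) :
    braidPast s.toLinearMap s.toLinearMap (c z ⊗ₜ[k] a)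
      = c.toLinearMap.lTensor A (braidPast s.toLinearMap s.toLinearMap (z ⊗ₜ[k] a)) := by
  have := LinearMap.congr_fun hs.braid_compat (z ⊗ₜ[k] a)
  simpa using this

lemma comul_compat' (hs : IsBrTransposition k H A comul counit c s) (g : H) (a : A) :
    braidPast s.toLinearMap s.toLinearMap (comul g ⊗ₜ[k] a)
      = comul.lTensor A (s (g ⊗ₜ[k] a)) := by
  have := LinearMap.congr_fun hs.comul_compat (g ⊗ₜ[k] a)
  simpa using this.symm

lemma counit_compat' (hs : IsBrTransposition k H A comul counit c s) (g : H) (a : A) :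
    (TensorProduct.rid k A) (counit.lTensor A (s (g ⊗ₜ[k] a))) = counit g • a := by
  have := LinearMap.congr_fun hs.counit_compat (g ⊗ₜ[k] a)
  simpa using this

lemma compat_s' (hma : IsBrModuleAlgebra k H A comul counit c s ρ) (h : H) (x : H ⊗[k] A) :
    s (h ⊗ₜ[k] brActMap k H A ρ x)
      = (brActMap k H A ρ).rTensor H ((TensorProduct.assoc k H A H).symm
          (s.toLinearMap.lTensor H ((TensorProduct.assoc k H H A)
            (c.toLinearMap.rTensor A ((TensorProduct.assoc k H H A).symm (h ⊗ₜ[k] x)))))) := by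
  have := LinearMap.congr_fun hma.compat_s ((TensorProduct.assoc k H H A).symm (h ⊗ₜ[k] x))
  simpa using this

lemma mul_act' (hma : IsBrModuleAlgebra k H A comul counit c s ρ) (h : H) (w : A ⊗[k] A) :
    ρ h (LinearMap.mul' k A w) = LinearMap.mul' k A (act2 s ρ (comul h ⊗ₜ[k] w)) := by
  induction w using TensorProduct.induction_on with
  | zero => simp
  | tmul a b =>
      have := hma.mul_act h a b
      simpa [act2] using this
  | add u v hu hv =>
      simp only [map_add, tmul_add, hu, hv]

lemma pi_mul' (x : H ⊗[k] H) (a : A) :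
    brActMap k H A ρ (LinearMap.mul' k H x ⊗ₜ[k] a)
      = brActMap k H A ρ ((brActMap k H A ρ).lTensor H
          ((TensorProduct.assoc k H H A) (x ⊗ₜ[k] a))) := by
  induction x using TensorProduct.induction_on with
  | zero => simp
  | tmul h g => simp [LinearMap.mul'_apply, map_mul]
  | add u v hu hv => simp only [map_add, add_tmul, hu, hv]

end Aux1

end Paper
namespace Paper

section Aux2

set_option synthInstance.maxHeartbeats 400000
set_option maxHeartbeats 1600000

variable {k : Type*} [Field k]
variable {H : Type*} [Ring H] [Algebra k H]
variable {A : Type*} [Ring A] [Algebra k A]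
variable {comul : H →ₗ[k] H ⊗[k] H} {counit : H →ₗ[k] k}
variable {c : H ⊗[k] H ≃ₗ[k] H ⊗[k] H} {s : H ⊗[k] A ≃ₗ[k] A ⊗[k] H}
variable {ρ : H →ₐ[k] Module.End k A}

lemma unit_left' (hs : IsBrTransposition k H A comul counit c s)
    (hma : IsBrModuleAlgebra k H A comul counit c s ρ) (x : H ⊗[k] H) (a : A) :
    LinearMap.mul' k A (act2 s ρ (x ⊗ₜ[k] ((1 : A) ⊗ₜ[k] a)))
      = brActMap k H A ρ ((TensorProduct.lid k H) (counit.rTensor H x) ⊗ₜ[k] a) := by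
  induction x using TensorProduct.induction_on with
  | zero => simp
  | tmul h g =>
      simp [act2, midMap_tmul, hs.unit_A, hma.one_act, LinearMap.mul'_apply,
        smul_mul_assoc, map_smul, LinearMap.smul_apply, smul_tmul']
  | add u v hu hv => simp only [map_add, add_tmul, hu, hv]

lemma unit_right_aux (hma : IsBrModuleAlgebra k H A comul counit c s ρ)
    (h : H) (y : A ⊗[k] H) :
    LinearMap.mul' k A (TensorProduct.map (brActMap k H A ρ) (brActMap k H A ρ)
        ((TensorProduct.assoc k H A (H ⊗[k] A)).symm
          (h ⊗ₜ[k] (TensorProduct.assoc k A H A) (y ⊗ₜ[k] (1 : A)))))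
      = ρ h ((TensorProduct.rid k A) (counit.lTensor A y)) := by
  induction y using TensorProduct.induction_on with
  | zero => simp
  | tmul a' h' =>
      simp [hma.one_act, LinearMap.mul'_apply, map_smul]
  | add u v hu hv => simp only [map_add, add_tmul, tmul_add, hu, hv]

lemma unit_right' (hs : IsBrTransposition k H A comul counit c s)
    (hma : IsBrModuleAlgebra k H A comul counit c s ρ) (x : H ⊗[k] H) (a : A) :
    LinearMap.mul' k A (act2 s ρ (x ⊗ₜ[k] (a ⊗ₜ[k] (1 : A))))
      = brActMap k H A ρ ((TensorProduct.rid k H) (counit.lTensor H x) ⊗ₜ[k] a) := by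
  induction x using TensorProduct.induction_on with
  | zero => simp
  | tmul h g =>
      rw [show act2 s ρ ((h ⊗ₜ[k] g) ⊗ₜ[k] (a ⊗ₜ[k] (1 : A)))
          = TensorProduct.map (brActMap k H A ρ) (brActMap k H A ρ)
              ((TensorProduct.assoc k H A (H ⊗[k] A)).symm
                (h ⊗ₜ[k] (TensorProduct.assoc k A H A)
                  (s.toLinearMap (g ⊗ₜ[k] a) ⊗ₜ[k] (1 : A)))) from by
            simp [act2, midMap_tmul]]
      rw [unit_right_aux hma]
      have hcc : (TensorProduct.rid k A) (counit.lTensor A (s.toLinearMap (g ⊗ₜ[k] a)))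
          = counit g • a := counit_compat' hs g a
      rw [hcc]
      simp [map_smul]
  | add u v hu hv => simp only [map_add, add_tmul, hu, hv]

end Aux2

end Paper
namespace Paper

section Aux3

set_option synthInstance.maxHeartbeats 400000
set_option maxHeartbeats 1600000

variable {k : Type*} [Field k]
variable {H : Type*} [Ring H] [Algebra k H]
variable {A : Type*} [Ring A] [Algebra k A]
variable {comul : H →ₗ[k] H ⊗[k] H} {counit : H →ₗ[k] k}
variable {c : H ⊗[k] H ≃ₗ[k] H ⊗[k] H} {s : H ⊗[k] A ≃ₗ[k] A ⊗[k] H}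
variable {ρ : H →ₐ[k] Module.End k A}

lemma mu3_tmul' (a : A) (w : A ⊗[k] A) :
    mu3 (a ⊗ₜ[k] w) = a * LinearMap.mul' k A w := by
  simp [mu3]

/-- `S1`: acting by `y ⊗ 1` on `a ⊗ (b ⊗ d)` is acting by `y` on `a ⊗ b`. -/
lemma act3_assoc_one (hs : IsBrTransposition k H A comul counit c s)
    (y : H ⊗[k] H) (a b d : A) :
    act3 s ρ ((TensorProduct.assoc k H H H) (y ⊗ₜ[k] (1 : H)) ⊗ₜ[k] (a ⊗ₜ[k] (b ⊗ₜ[k] d)))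
      = (TensorProduct.assoc k A A A) (act2 s ρ (y ⊗ₜ[k] (a ⊗ₜ[k] b)) ⊗ₜ[k] d) := by
  induction y using TensorProduct.induction_on with
  | zero => simp
  | tmul p q =>
      have h0 : s.toLinearMap ((1 : H) ⊗ₜ[k] a) = a ⊗ₜ[k] (1 : H) := by
        simpa using hs.unit_H a
      have h1 : s.toLinearMap ((1 : H) ⊗ₜ[k] b) = b ⊗ₜ[k] (1 : H) := by
        simpa using hs.unit_H b
      simp only [act3, act2, LinearMap.comp_apply, TensorProduct.assoc_tmul,
        midMap_tmul, braidPast_tmul, h0, h1, TensorProduct.assoc_symm_tmul,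
        LinearMap.rTensor_tmul, LinearEquiv.coe_coe]
      generalize s (q ⊗ₜ[k] a) = w
      induction w using TensorProduct.induction_on with
      | zero => simp
      | tmul a1 q1 =>
          simp [midMap_tmul, h1, map_one ρ, Module.End.one_apply]
      | add u v hu hv =>
          simp only [map_add, add_tmul, tmul_add, hu, hv]
  | add u v hu hv => simp only [map_add, add_tmul, hu, hv]

/-- Acting by `1 ⊗ y` on `a ⊗ w`. -/
lemma act3_one_tensor (y : H ⊗[k] H) (a : A) (w : A ⊗[k] A) :
    act3 s ρ (((1 : H) ⊗ₜ[k] y) ⊗ₜ[k] (a ⊗ₜ[k] w))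
      = (LinearMap.lTensor A (act2 s ρ ∘ₗ (TensorProduct.mk k (H ⊗[k] H) (A ⊗[k] A)).flip w))
          (braidPast s.toLinearMap s.toLinearMap (y ⊗ₜ[k] a)) := by
  simp only [act3, LinearMap.comp_apply, midMap_tmul]
  generalize braidPast s.toLinearMap s.toLinearMap (y ⊗ₜ[k] a) = v
  induction v using TensorProduct.induction_on with
  | zero => simp
  | tmul a' y' => simp [map_one ρ, Module.End.one_apply]
  | add u v hu hv => simp only [map_add, add_tmul, tmul_add, hu, hv]

end Aux3

end Paper
namespace Paper

section Aux4

set_option synthInstance.maxHeartbeats 400000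
set_option maxHeartbeats 1600000

variable {k : Type*} [Field k]
variable {H : Type*} [Ring H] [Algebra k H]
variable {A : Type*} [Ring A] [Algebra k A]
variable {comul : H →ₗ[k] H ⊗[k] H} {counit : H →ₗ[k] k}
variable {c : H ⊗[k] H ≃ₗ[k] H ⊗[k] H} {s : H ⊗[k] A ≃ₗ[k] A ⊗[k] H}
variable {ρ : H →ₐ[k] Module.End k A}

/-- Claim A2 : `x · (a ⊗ (w-multiplied))` as a triple action. -/
lemma claimA2 (hs : IsBrTransposition k H A comul counit c s)
    (hma : IsBrModuleAlgebra k H A comul counit c s ρ)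
    (x : H ⊗[k] H) (a : A) (w : A ⊗[k] A) :
    LinearMap.mul' k A (act2 s ρ (x ⊗ₜ[k] (a ⊗ₜ[k] LinearMap.mul' k A w)))
      = mu3 (act3 s ρ (comul.lTensor H x ⊗ₜ[k] (a ⊗ₜ[k] w))) := by
  induction x using TensorProduct.induction_on with
  | zero => simp
  | tmul h g =>
      rw [show act2 s ρ ((h ⊗ₜ[k] g) ⊗ₜ[k] (a ⊗ₜ[k] LinearMap.mul' k A w))
            = TensorProduct.map (brActMap k H A ρ) (brActMap k H A ρ)
                ((TensorProduct.assoc k H A (H ⊗[k] A)).symm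
                  (h ⊗ₜ[k] (TensorProduct.assoc k A H A)
                    (s (g ⊗ₜ[k] a) ⊗ₜ[k] LinearMap.mul' k A w))) from by
          simp [act2, midMap_tmul]]
      rw [show comul.lTensor H (h ⊗ₜ[k] g) = h ⊗ₜ[k] comul g from by simp]
      rw [show act3 s ρ ((h ⊗ₜ[k] comul g) ⊗ₜ[k] (a ⊗ₜ[k] w))
            = TensorProduct.map (brActMap k H A ρ) (act2 s ρ)
                ((TensorProduct.assoc k H A ((H ⊗[k] H) ⊗[k] (A ⊗[k] A))).symm
                  (h ⊗ₜ[k] (TensorProduct.assoc k A (H ⊗[k] H) (A ⊗[k] A))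
                    (braidPast s.toLinearMap s.toLinearMap (comul g ⊗ₜ[k] a) ⊗ₜ[k] w)))
          from by simp [act3, midMap_tmul]]
      rw [comul_compat' hs g a]
      generalize s (g ⊗ₜ[k] a) = y
      induction y using TensorProduct.induction_on with
      | zero => simp
      | tmul a1 g1 =>
          simp [mul_act' hma, mu3_tmul', LinearMap.mul'_apply]
      | add u v hu hv => simp only [map_add, tmul_add, add_tmul, hu, hv]
  | add u v hu hv => simp only [map_add, add_tmul, hu, hv]

end Aux4

end Paper
namespace Paper

section Aux5

set_option synthInstance.maxHeartbeats 400000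
set_option maxHeartbeats 1600000

variable {k : Type*} [Field k]
variable {H : Type*} [Ring H] [Algebra k H]
variable {A : Type*} [Ring A] [Algebra k A]
variable {comul : H →ₗ[k] H ⊗[k] H} {counit : H →ₗ[k] k}
variable {c : H ⊗[k] H ≃ₗ[k] H ⊗[k] H} {s : H ⊗[k] A ≃ₗ[k] A ⊗[k] H}
variable {ρ : H →ₐ[k] Module.End k A}

lemma act2_tmul (x1 x2 : H) (w1 w2 : A) :
    act2 s ρ ((x1 ⊗ₜ[k] x2) ⊗ₜ[k] (w1 ⊗ₜ[k] w2))
      = TensorProduct.map (brActMap k H A ρ) (brActMap k H A ρ)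
          ((TensorProduct.assoc k H A (H ⊗[k] A)).symm
            (x1 ⊗ₜ[k] (TensorProduct.assoc k A H A) (s (x2 ⊗ₜ[k] w1) ⊗ₜ[k] w2))) := by
  simp [act2, midMap_tmul]

lemma act3_tmul (x1 : H) (x2 : H ⊗[k] H) (w1 : A) (w2 : A ⊗[k] A) :
    act3 s ρ ((x1 ⊗ₜ[k] x2) ⊗ₜ[k] (w1 ⊗ₜ[k] w2))
      = TensorProduct.map (brActMap k H A ρ) (act2 s ρ)
          ((TensorProduct.assoc k H A ((H ⊗[k] H) ⊗[k] (A ⊗[k] A))).symm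
            (x1 ⊗ₜ[k] (TensorProduct.assoc k A (H ⊗[k] H) (A ⊗[k] A))
              (braidPast s.toLinearMap s.toLinearMap (x2 ⊗ₜ[k] w1) ⊗ₜ[k] w2))) := by
  simp [act3, midMap_tmul]

/-- AL : unfolding the left-nested product through `mul_A`. -/
lemma claimA_left (hs : IsBrTransposition k H A comul counit c s)
    (h g : H) (w : A ⊗[k] A) (d : A) :
    LinearMap.mul' k A (act2 s ρ ((h ⊗ₜ[k] g) ⊗ₜ[k] (LinearMap.mul' k A w ⊗ₜ[k] d)))
      = (LinearMap.mul' k A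
          ∘ₗ TensorProduct.map ((ρ h : Module.End k A) ∘ₗ LinearMap.mul' k A)
              (brActMap k H A ρ ∘ₗ (TensorProduct.mk k H A).flip d))
          (braidUnder s.toLinearMap s.toLinearMap (g ⊗ₜ[k] w)) := by
  rw [act2_tmul, show s (g ⊗ₜ[k] LinearMap.mul' k A w)
      = (LinearMap.mul' k A).rTensor H (braidUnder s.toLinearMap s.toLinearMap (g ⊗ₜ[k] w))
      from s_mul_A' hs g w]
  generalize braidUnder s.toLinearMap s.toLinearMap (g ⊗ₜ[k] w) = X
  induction X using TensorProduct.induction_on with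
  | zero => simp
  | tmul x1 x2 => simp [LinearMap.mul'_apply]
  | add u v hu hv => simp only [map_add, add_tmul, tmul_add, hu, hv]

/-- AM : rewriting `ρ h ∘ μ` via `mul_act`. -/
lemma claimA_mid (hma : IsBrModuleAlgebra k H A comul counit c s ρ)
    (h : H) (d : A) (X : (A ⊗[k] A) ⊗[k] H) :
    (LinearMap.mul' k A
        ∘ₗ TensorProduct.map ((ρ h : Module.End k A) ∘ₗ LinearMap.mul' k A)
            (brActMap k H A ρ ∘ₗ (TensorProduct.mk k H A).flip d)) X
      = (LinearMap.mul' k A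
          ∘ₗ TensorProduct.map (LinearMap.mul' k A ∘ₗ act2 s ρ
              ∘ₗ (TensorProduct.mk k (H ⊗[k] H) (A ⊗[k] A)) (comul h))
              (brActMap k H A ρ ∘ₗ (TensorProduct.mk k H A).flip d)) X := by
  induction X using TensorProduct.induction_on with
  | zero => simp
  | tmul x1 x2 => simp [mul_act' hma]
  | add u v hu hv => simp only [map_add, hu, hv]

/-- AR : reassembling as a triple action. -/
lemma claimA_right (hs : IsBrTransposition k H A comul counit c s)
    (u : H ⊗[k] H) (g : H) (w : A ⊗[k] A) (d : A) :
    (LinearMap.mul' k A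
        ∘ₗ TensorProduct.map (LinearMap.mul' k A ∘ₗ act2 s ρ
            ∘ₗ (TensorProduct.mk k (H ⊗[k] H) (A ⊗[k] A)) u)
            (brActMap k H A ρ ∘ₗ (TensorProduct.mk k H A).flip d))
        (braidUnder s.toLinearMap s.toLinearMap (g ⊗ₜ[k] w))
      = mu3 (act3 s ρ ((TensorProduct.assoc k H H H) (u ⊗ₜ[k] g)
          ⊗ₜ[k] (TensorProduct.assoc k A A A) (w ⊗ₜ[k] d))) := by
  induction u using TensorProduct.induction_on with
  | zero => simp
  | tmul h1 h2 =>
      induction w using TensorProduct.induction_on with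
      | zero => simp
      | tmul a b =>
          rw [braidUnder_tmul]
          simp only [TensorProduct.assoc_tmul, act3_tmul, braidPast_tmul,
            LinearEquiv.coe_coe]
          generalize s (g ⊗ₜ[k] a) = y
          induction y using TensorProduct.induction_on with
          | zero => simp
          | tmul a1 g1 =>
              simp only [TensorProduct.assoc_tmul, TensorProduct.assoc_symm_tmul,
                LinearMap.lTensor_tmul, LinearMap.rTensor_tmul, LinearEquiv.coe_coe]
              obtain ⟨Sz, hz⟩ := TensorProduct.exists_finset (s (g1 ⊗ₜ[k] b))
              obtain ⟨Sy2, hy2⟩ := TensorProduct.exists_finset (s (h2 ⊗ₜ[k] a1))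
              simp only [hz, hy2, TensorProduct.tmul_sum, TensorProduct.sum_tmul,
                map_sum, LinearMap.comp_apply, TensorProduct.map_tmul,
                TensorProduct.assoc_tmul, TensorProduct.assoc_symm_tmul,
                TensorProduct.mk_apply, LinearMap.flip_apply,
                LinearMap.mul'_apply, brActMap_tmul, act2_tmul, mu3_tmul,
                LinearMap.lTensor_tmul, LinearMap.rTensor_tmul, LinearEquiv.coe_coe,
                Finset.sum_mul, Finset.mul_sum, mu3_tmul', Module.End.mul_apply]
              rw [Finset.sum_comm]
              refine Finset.sum_congr rfl fun p _ => Finset.sum_congr rfl fun q _ => ?_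
              simp [mul_assoc]
          | add u v hu hv => simp only [map_add, add_tmul, tmul_add, hu, hv]
      | add u v hu hv => simp only [map_add, add_tmul, tmul_add, hu, hv]
  | add u v hu hv =>
      simp only [map_add, add_tmul, tmul_add, TensorProduct.map_add_left,
        LinearMap.add_comp, LinearMap.comp_add, LinearMap.add_apply,
        LinearMap.comp_apply] at hu hv ⊢
      rw [hu, hv]

end Aux5

end Paper
namespace Paper

section Aux6

set_option synthInstance.maxHeartbeats 400000
set_option maxHeartbeats 1600000

variable {k : Type*} [Field k]
variable {H : Type*} [Ring H] [Algebra k H]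
variable {A : Type*} [Ring A] [Algebra k A]
variable {comul : H →ₗ[k] H ⊗[k] H} {counit : H →ₗ[k] k}
variable {c : H ⊗[k] H ≃ₗ[k] H ⊗[k] H} {s : H ⊗[k] A ≃ₗ[k] A ⊗[k] H}
variable {ρ : H →ₐ[k] Module.End k A}

/-- Claim A : the left-nested twisted product as a triple action. -/
lemma claimA (hs : IsBrTransposition k H A comul counit c s)
    (hma : IsBrModuleAlgebra k H A comul counit c s ρ)
    (x : H ⊗[k] H) (w : A ⊗[k] A) (d : A) :
    LinearMap.mul' k A (act2 s ρ (x ⊗ₜ[k] (LinearMap.mul' k A w ⊗ₜ[k] d)))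
      = mu3 (act3 s ρ ((TensorProduct.assoc k H H H) (comul.rTensor H x)
          ⊗ₜ[k] (TensorProduct.assoc k A A A) (w ⊗ₜ[k] d))) := by
  induction x using TensorProduct.induction_on with
  | zero => simp
  | tmul h g =>
      rw [show comul.rTensor H (h ⊗ₜ[k] g) = comul h ⊗ₜ[k] g from by simp,
        claimA_left hs, claimA_mid hma, claimA_right hs]
  | add u v hu hv => simp only [map_add, add_tmul, hu, hv]

end Aux6

section AuxCoh

set_option synthInstance.maxHeartbeats 400000
set_option maxHeartbeats 1600000

variable {k : Type*} [Field k]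
variable {M N P Q M' N' Q' X Y V W : Type*}
  [AddCommMonoid M] [AddCommMonoid N] [AddCommMonoid P] [AddCommMonoid Q]
  [AddCommMonoid M'] [AddCommMonoid N'] [AddCommMonoid Q'] [AddCommMonoid X]
  [AddCommMonoid Y] [AddCommMonoid V] [AddCommMonoid W]
  [Module k M] [Module k N] [Module k P] [Module k Q]
  [Module k M'] [Module k N'] [Module k Q'] [Module k X]
  [Module k Y] [Module k V] [Module k W]

lemma lTensor_equiv_cancel (e : X ≃ₗ[k] Y) (z : P ⊗[k] X) :
    (e.symm.toLinearMap.lTensor P) ((e.toLinearMap.lTensor P) z) = z := by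
  rw [← LinearMap.comp_apply, ← LinearMap.lTensor_comp]
  have he : e.symm.toLinearMap ∘ₗ e.toLinearMap = LinearMap.id := by ext v; simp
  rw [he, LinearMap.lTensor_id, LinearMap.id_apply]

/-- Coherence of iterated transposition with the associator. -/
lemma braidPast_assoc_coh (f : M ⊗[k] P →ₗ[k] P ⊗[k] M') (g : N ⊗[k] P →ₗ[k] P ⊗[k] N')
    (h : Q ⊗[k] P →ₗ[k] P ⊗[k] Q') (x : (M ⊗[k] N) ⊗[k] Q) (p : P) :
    braidPast (braidPast h g) f ((TensorProduct.assoc k M N Q) x ⊗ₜ[k] p)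
      = ((TensorProduct.assoc k M' N' Q').toLinearMap.lTensor P)
          (braidPast h (braidPast g f) (x ⊗ₜ[k] p)) := by
  induction x using TensorProduct.induction_on with
  | zero => simp
  | tmul w q =>
      induction w using TensorProduct.induction_on with
      | zero => simp
      | tmul m n =>
          simp only [TensorProduct.assoc_tmul, braidPast_tmul, LinearEquiv.coe_coe]
          generalize h (q ⊗ₜ[k] p) = w1
          induction w1 using TensorProduct.induction_on with
          | zero => simp
          | tmul p1 q1 =>
              simp only [TensorProduct.assoc_tmul, TensorProduct.assoc_symm_tmul,
                LinearMap.rTensor_tmul, LinearMap.lTensor_tmul, braidPast_tmul,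
                LinearEquiv.coe_coe]
              generalize g (n ⊗ₜ[k] p1) = w2
              induction w2 using TensorProduct.induction_on with
              | zero => simp
              | tmul p2 n1 =>
                  simp only [TensorProduct.assoc_tmul, TensorProduct.assoc_symm_tmul,
                    LinearMap.rTensor_tmul, LinearMap.lTensor_tmul, LinearEquiv.coe_coe]
                  generalize f (m ⊗ₜ[k] p2) = w3
                  induction w3 using TensorProduct.induction_on with
                  | zero => simp
                  | tmul p3 m1 => simp
                  | add u v hu hv => simp only [map_add, add_tmul, tmul_add, hu, hv]
              | add u v hu hv => simp only [map_add, add_tmul, tmul_add, hu, hv]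
          | add u v hu hv => simp only [map_add, add_tmul, tmul_add, hu, hv]
      | add u v hu hv => simp only [map_add, add_tmul, tmul_add, hu, hv]
  | add u v hu hv => simp only [map_add, add_tmul, tmul_add, hu, hv]

lemma braidPast_assoc_coh_symm (f : M ⊗[k] P →ₗ[k] P ⊗[k] M') (g : N ⊗[k] P →ₗ[k] P ⊗[k] N')
    (h : Q ⊗[k] P →ₗ[k] P ⊗[k] Q') (x : M ⊗[k] (N ⊗[k] Q)) (p : P) :
    braidPast h (braidPast g f) ((TensorProduct.assoc k M N Q).symm x ⊗ₜ[k] p)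
      = ((TensorProduct.assoc k M' N' Q').symm.toLinearMap.lTensor P)
          (braidPast (braidPast h g) f (x ⊗ₜ[k] p)) := by
  have := braidPast_assoc_coh f g h ((TensorProduct.assoc k M N Q).symm x) p
  rw [LinearEquiv.apply_symm_apply] at this
  rw [this, lTensor_equiv_cancel (TensorProduct.assoc k M' N' Q')]

/-- Congruence of `braidPast` in the first (`M`) slot. -/
lemma braidPast_congr_left (f : N ⊗[k] P →ₗ[k] P ⊗[k] N')
    (g : M ⊗[k] P →ₗ[k] P ⊗[k] M') (g' : X ⊗[k] P →ₗ[k] P ⊗[k] Y)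
    (θ : M →ₗ[k] X) (θ' : M' →ₗ[k] Y)
    (hθ : ∀ (m : M) (p : P), g' (θ m ⊗ₜ[k] p) = (θ'.lTensor P) (g (m ⊗ₜ[k] p)))
    (w : M ⊗[k] N) (p : P) :
    braidPast f g' ((θ.rTensor N) w ⊗ₜ[k] p)
      = ((θ'.rTensor N').lTensor P) (braidPast f g (w ⊗ₜ[k] p)) := by
  induction w using TensorProduct.induction_on with
  | zero => simp
  | tmul m n =>
      simp only [LinearMap.rTensor_tmul, braidPast_tmul]
      generalize f (n ⊗ₜ[k] p) = y
      induction y using TensorProduct.induction_on with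
      | zero => simp
      | tmul p1 n1 =>
          simp only [TensorProduct.assoc_symm_tmul, LinearMap.rTensor_tmul,
            TensorProduct.assoc_tmul, LinearMap.lTensor_tmul]
          rw [hθ]
          generalize g (m ⊗ₜ[k] p1) = z
          induction z using TensorProduct.induction_on with
          | zero => simp
          | tmul p2 m1 => simp
          | add u v hu hv => simp only [map_add, add_tmul, tmul_add, hu, hv]
      | add u v hu hv => simp only [map_add, add_tmul, tmul_add, hu, hv]
  | add u v hu hv => simp only [map_add, add_tmul, tmul_add, hu, hv]

/-- Congruence of `braidPast` in the second (`N`) slot. -/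
lemma braidPast_congr_right (f : N ⊗[k] P →ₗ[k] P ⊗[k] N')
    (f' : X ⊗[k] P →ₗ[k] P ⊗[k] Y) (g : M ⊗[k] P →ₗ[k] P ⊗[k] M')
    (θ : N →ₗ[k] X) (θ' : N' →ₗ[k] Y)
    (hθ : ∀ (n : N) (p : P), f' (θ n ⊗ₜ[k] p) = (θ'.lTensor P) (f (n ⊗ₜ[k] p)))
    (w : M ⊗[k] N) (p : P) :
    braidPast f' g ((θ.lTensor M) w ⊗ₜ[k] p)
      = ((θ'.lTensor M').lTensor P) (braidPast f g (w ⊗ₜ[k] p)) := by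
  induction w using TensorProduct.induction_on with
  | zero => simp
  | tmul m n =>
      simp only [LinearMap.lTensor_tmul, braidPast_tmul]
      rw [hθ]
      generalize f (n ⊗ₜ[k] p) = y
      induction y using TensorProduct.induction_on with
      | zero => simp
      | tmul p1 n1 =>
          simp only [TensorProduct.assoc_symm_tmul, LinearMap.rTensor_tmul,
            TensorProduct.assoc_tmul, LinearMap.lTensor_tmul]
          generalize g (m ⊗ₜ[k] p1) = z
          induction z using TensorProduct.induction_on with
          | zero => simp
          | tmul p2 m1 => simp
          | add u v hu hv => simp only [map_add, add_tmul, tmul_add, hu, hv]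
      | add u v hu hv => simp only [map_add, add_tmul, tmul_add, hu, hv]
  | add u v hu hv => simp only [map_add, add_tmul, tmul_add, hu, hv]

end AuxCoh

end Paper
namespace Paper

section Aux7

set_option synthInstance.maxHeartbeats 400000
set_option maxHeartbeats 1600000

variable {k : Type*} [Field k]
variable {H : Type*} [Ring H] [Algebra k H]
variable {A : Type*} [Ring A] [Algebra k A]
variable {comul : H →ₗ[k] H ⊗[k] H} {counit : H →ₗ[k] k}
variable {c : H ⊗[k] H ≃ₗ[k] H ⊗[k] H} {s : H ⊗[k] A ≃ₗ[k] A ⊗[k] H}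
variable {ρ : H →ₐ[k] Module.End k A}

lemma lTensor_lTensor_apply {X Y Z P : Type*} [AddCommMonoid X] [AddCommMonoid Y]
    [AddCommMonoid Z] [AddCommMonoid P] [Module k X] [Module k Y] [Module k Z] [Module k P]
    (f : Y →ₗ[k] Z) (g : X →ₗ[k] Y) (z : P ⊗[k] X) :
    f.lTensor P (g.lTensor P z) = (f ∘ₗ g).lTensor P z := by
  rw [LinearMap.lTensor_comp, LinearMap.comp_apply]

/-- `braidPast s s` is compatible with `μ_H ⊗ μ_H`. -/
lemma T_map_mul (hs : IsBrTransposition k H A comul counit c s)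
    (W : (H ⊗[k] H) ⊗[k] (H ⊗[k] H)) (a : A) :
    braidPast s.toLinearMap s.toLinearMap
        (TensorProduct.map (LinearMap.mul' k H) (LinearMap.mul' k H) W ⊗ₜ[k] a)
      = ((TensorProduct.map (LinearMap.mul' k H) (LinearMap.mul' k H)).lTensor A)
          (braidPast (braidPast s.toLinearMap s.toLinearMap)
            (braidPast s.toLinearMap s.toLinearMap) (W ⊗ₜ[k] a)) := by
  have hθ : ∀ (y : H ⊗[k] H) (v : A), s.toLinearMap (LinearMap.mul' k H y ⊗ₜ[k] v)
      = ((LinearMap.mul' k H).lTensor A)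
          (braidPast s.toLinearMap s.toLinearMap (y ⊗ₜ[k] v)) := by
    intro y v; simpa using s_mul_H' hs y v
  rw [show TensorProduct.map (LinearMap.mul' k H) (LinearMap.mul' k H) W
      = ((LinearMap.mul' k H).rTensor H) (((LinearMap.mul' k H).lTensor (H ⊗[k] H)) W) from by
    rw [← LinearMap.comp_apply, LinearMap.rTensor_comp_lTensor]]
  rw [braidPast_congr_left s.toLinearMap
      (braidPast s.toLinearMap s.toLinearMap) s.toLinearMap
      (LinearMap.mul' k H) (LinearMap.mul' k H) hθ]
  rw [braidPast_congr_right (braidPast s.toLinearMap s.toLinearMap) s.toLinearMap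
      (braidPast s.toLinearMap s.toLinearMap)
      (LinearMap.mul' k H) (LinearMap.mul' k H) hθ]
  rw [lTensor_lTensor_apply, LinearMap.rTensor_comp_lTensor]

/-- `braidPast s s` is compatible with `midMap c`. -/
lemma T_midMap (hs : IsBrTransposition k H A comul counit c s)
    (Y : (H ⊗[k] H) ⊗[k] (H ⊗[k] H)) (a : A) :
    braidPast (braidPast s.toLinearMap s.toLinearMap) (braidPast s.toLinearMap s.toLinearMap)
        ((midMap c.toLinearMap Y : (H ⊗[k] H) ⊗[k] (H ⊗[k] H)) ⊗ₜ[k] a)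
      = ((midMap c.toLinearMap :
            (H ⊗[k] H) ⊗[k] (H ⊗[k] H) →ₗ[k] (H ⊗[k] H) ⊗[k] (H ⊗[k] H)).lTensor A)
          (braidPast (braidPast s.toLinearMap s.toLinearMap)
            (braidPast s.toLinearMap s.toLinearMap) (Y ⊗ₜ[k] a)) := by
  set T := braidPast s.toLinearMap s.toLinearMap with hT
  set E1 := (TensorProduct.assoc k H H (H ⊗[k] H)).toLinearMap with hE1
  set E2 := (TensorProduct.assoc k H H H).symm.toLinearMap.lTensor H with hE2
  set E3 := (c.toLinearMap.rTensor H).lTensor H with hE3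
  set E4 := (TensorProduct.assoc k H H H).toLinearMap.lTensor H with hE4
  set E5 := (TensorProduct.assoc k H H (H ⊗[k] H)).symm.toLinearMap with hE5
  have hmid : (midMap c.toLinearMap :
      (H ⊗[k] H) ⊗[k] (H ⊗[k] H) →ₗ[k] (H ⊗[k] H) ⊗[k] (H ⊗[k] H))
      = E5 ∘ₗ E4 ∘ₗ E3 ∘ₗ E2 ∘ₗ E1 := rfl
  -- hθ facts
  have hco : ∀ (n : (H ⊗[k] H) ⊗[k] H) (p : A),
      braidPast T s.toLinearMap ((TensorProduct.assoc k H H H).toLinearMap n ⊗ₜ[k] p)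
        = ((TensorProduct.assoc k H H H).toLinearMap.lTensor A)
            (braidPast s.toLinearMap T (n ⊗ₜ[k] p)) := by
    intro n p
    simpa using braidPast_assoc_coh s.toLinearMap s.toLinearMap s.toLinearMap n p
  have hco' : ∀ (n : H ⊗[k] (H ⊗[k] H)) (p : A),
      braidPast s.toLinearMap T ((TensorProduct.assoc k H H H).symm.toLinearMap n ⊗ₜ[k] p)
        = ((TensorProduct.assoc k H H H).symm.toLinearMap.lTensor A)
            (braidPast T s.toLinearMap (n ⊗ₜ[k] p)) := by
    intro n p
    simpa using braidPast_assoc_coh_symm s.toLinearMap s.toLinearMap s.toLinearMap n p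
  have hcc : ∀ (n : (H ⊗[k] H) ⊗[k] H) (p : A),
      braidPast s.toLinearMap T ((c.toLinearMap.rTensor H) n ⊗ₜ[k] p)
        = ((c.toLinearMap.rTensor H).lTensor A) (braidPast s.toLinearMap T (n ⊗ₜ[k] p)) := by
    intro n p
    exact braidPast_congr_left s.toLinearMap T T c.toLinearMap c.toLinearMap
      (fun z v => braid_compat' hs z v) n p
  have step1 : ∀ (x : H ⊗[k] (H ⊗[k] (H ⊗[k] H))) (p : A),
      braidPast T T (E5 x ⊗ₜ[k] p)
        = (E5.lTensor A) (braidPast (braidPast T s.toLinearMap) s.toLinearMap (x ⊗ₜ[k] p)) := by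
    intro x p
    simpa [hT, hE5] using braidPast_assoc_coh_symm s.toLinearMap s.toLinearMap T x p
  have step2 : ∀ (x : H ⊗[k] ((H ⊗[k] H) ⊗[k] H)) (p : A),
      braidPast (braidPast T s.toLinearMap) s.toLinearMap (E4 x ⊗ₜ[k] p)
        = (E4.lTensor A)
            (braidPast (braidPast s.toLinearMap T) s.toLinearMap (x ⊗ₜ[k] p)) :=
    fun x p => braidPast_congr_right (braidPast s.toLinearMap T)
      (braidPast T s.toLinearMap) s.toLinearMap
      (TensorProduct.assoc k H H H).toLinearMap
      (TensorProduct.assoc k H H H).toLinearMap hco x p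
  have step3 : ∀ (x : H ⊗[k] ((H ⊗[k] H) ⊗[k] H)) (p : A),
      braidPast (braidPast s.toLinearMap T) s.toLinearMap (E3 x ⊗ₜ[k] p)
        = (E3.lTensor A)
            (braidPast (braidPast s.toLinearMap T) s.toLinearMap (x ⊗ₜ[k] p)) :=
    fun x p => braidPast_congr_right (braidPast s.toLinearMap T)
      (braidPast s.toLinearMap T) s.toLinearMap
      (c.toLinearMap.rTensor H) (c.toLinearMap.rTensor H) hcc x p
  have step4 : ∀ (x : H ⊗[k] (H ⊗[k] (H ⊗[k] H))) (p : A),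
      braidPast (braidPast s.toLinearMap T) s.toLinearMap (E2 x ⊗ₜ[k] p)
        = (E2.lTensor A)
            (braidPast (braidPast T s.toLinearMap) s.toLinearMap (x ⊗ₜ[k] p)) :=
    fun x p => braidPast_congr_right (braidPast T s.toLinearMap)
      (braidPast s.toLinearMap T) s.toLinearMap
      (TensorProduct.assoc k H H H).symm.toLinearMap
      (TensorProduct.assoc k H H H).symm.toLinearMap hco' x p
  have step5 : ∀ (x : (H ⊗[k] H) ⊗[k] (H ⊗[k] H)) (p : A),
      braidPast (braidPast T s.toLinearMap) s.toLinearMap (E1 x ⊗ₜ[k] p)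
        = (E1.lTensor A) (braidPast T T (x ⊗ₜ[k] p)) := by
    intro x p
    simpa [hT, hE1] using braidPast_assoc_coh s.toLinearMap s.toLinearMap T x p
  rw [hmid]
  simp only [LinearMap.comp_apply]
  rw [step1, step2, step3, step4, step5]
  simp only [lTensor_lTensor_apply]

/-- `braidPast s s` is a transposition for the multiplication `mulB` of `H ⊗_c H`. -/
lemma T_mulB (hs : IsBrTransposition k H A comul counit c s)
    (Y : (H ⊗[k] H) ⊗[k] (H ⊗[k] H)) (a : A) :
    braidPast s.toLinearMap s.toLinearMap (mulB k H c Y ⊗ₜ[k] a)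
      = ((mulB k H c).lTensor A)
          (braidPast (braidPast s.toLinearMap s.toLinearMap)
            (braidPast s.toLinearMap s.toLinearMap) (Y ⊗ₜ[k] a)) := by
  rw [show mulB k H c Y = TensorProduct.map (LinearMap.mul' k H) (LinearMap.mul' k H)
      (midMap c.toLinearMap Y) from rfl]
  rw [T_map_mul hs, T_midMap hs, lTensor_lTensor_apply]
  rfl

end Aux7

end Paper
namespace Paper

section Aux8

set_option synthInstance.maxHeartbeats 400000
set_option maxHeartbeats 1600000

variable {k : Type*} [Field k]
variable {H : Type*} [Ring H] [Algebra k H]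
variable {A : Type*} [Ring A] [Algebra k A]
variable {comul : H →ₗ[k] H ⊗[k] H} {counit : H →ₗ[k] k}
variable {c : H ⊗[k] H ≃ₗ[k] H ⊗[k] H} {s : H ⊗[k] A ≃ₗ[k] A ⊗[k] H}
variable {ρ : H →ₐ[k] Module.End k A}

/-- `braidPast s s` is compatible with the action of `H` on `A`, over `braidPast c c`. -/
lemma T_compat_pi (hma : IsBrModuleAlgebra k H A comul counit c s ρ)
    (y : H ⊗[k] H) (x : H ⊗[k] A) :
    braidPast s.toLinearMap s.toLinearMap (y ⊗ₜ[k] brActMap k H A ρ x)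
      = (brActMap k H A ρ).rTensor (H ⊗[k] H)
          ((TensorProduct.assoc k H A (H ⊗[k] H)).symm
            ((braidPast s.toLinearMap s.toLinearMap).lTensor H
              ((TensorProduct.assoc k H (H ⊗[k] H) A)
                ((braidPast c.toLinearMap c.toLinearMap).rTensor A
                  ((TensorProduct.assoc k (H ⊗[k] H) H A).symm (y ⊗ₜ[k] x)))))) := by
  induction y using TensorProduct.induction_on with
  | zero => simp
  | tmul h h' =>
      induction x using TensorProduct.induction_on with
      | zero => simp
      | tmul g a =>
          simp only [braidPast_tmul, LinearEquiv.coe_coe, TensorProduct.assoc_symm_tmul,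
            LinearMap.rTensor_tmul, TensorProduct.assoc_tmul, LinearMap.lTensor_tmul]
          rw [compat_s' hma h' (g ⊗ₜ[k] a)]
          simp only [TensorProduct.assoc_symm_tmul, LinearMap.rTensor_tmul,
            LinearEquiv.coe_coe]
          obtain ⟨S1, h1⟩ := TensorProduct.exists_finset (c (h' ⊗ₜ[k] g))
          simp only [h1, TensorProduct.sum_tmul, TensorProduct.tmul_sum, map_sum,
            TensorProduct.assoc_tmul, TensorProduct.assoc_symm_tmul,
            LinearMap.rTensor_tmul, LinearMap.lTensor_tmul, LinearEquiv.coe_coe]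
          refine Finset.sum_congr rfl fun p _ => ?_
          have e2 : ∀ b : A, s (h ⊗ₜ[k] brActMap k H A ρ (p.1 ⊗ₜ[k] b))
              = (brActMap k H A ρ).rTensor H ((TensorProduct.assoc k H A H).symm
                  (s.toLinearMap.lTensor H ((TensorProduct.assoc k H H A)
                    (c.toLinearMap.rTensor A
                      ((TensorProduct.assoc k H H A).symm (h ⊗ₜ[k] (p.1 ⊗ₜ[k] b))))))) :=
            fun b => compat_s' hma h (p.1 ⊗ₜ[k] b)
          obtain ⟨S2, h2⟩ := TensorProduct.exists_finset (s (p.2 ⊗ₜ[k] a))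
          simp only [h2, TensorProduct.sum_tmul, TensorProduct.tmul_sum, map_sum,
            TensorProduct.assoc_tmul, TensorProduct.assoc_symm_tmul,
            LinearMap.rTensor_tmul, LinearMap.lTensor_tmul, LinearEquiv.coe_coe,
            braidPast_tmul]
          simp only [e2, TensorProduct.assoc_symm_tmul, LinearMap.rTensor_tmul,
            LinearEquiv.coe_coe]
          obtain ⟨S3, h3⟩ := TensorProduct.exists_finset (c (h ⊗ₜ[k] p.1))
          simp only [h3, h2, braidPast_tmul, TensorProduct.sum_tmul,
            TensorProduct.tmul_sum, map_sum,
            TensorProduct.assoc_tmul, TensorProduct.assoc_symm_tmul,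
            LinearMap.rTensor_tmul, LinearMap.lTensor_tmul, LinearEquiv.coe_coe]
          rw [Finset.sum_comm]
          refine Finset.sum_congr rfl fun r _ => Finset.sum_congr rfl fun q _ => ?_
          obtain ⟨S4, h4⟩ := TensorProduct.exists_finset (s (r.2 ⊗ₜ[k] q.1))
          simp only [h4, TensorProduct.sum_tmul, TensorProduct.tmul_sum, map_sum,
            TensorProduct.assoc_tmul, TensorProduct.assoc_symm_tmul,
            LinearMap.rTensor_tmul, LinearMap.lTensor_tmul, LinearEquiv.coe_coe]
      | add u v hu hv => simp only [map_add, tmul_add, add_tmul, hu, hv]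
  | add u v hu hv => simp only [map_add, tmul_add, add_tmul, hu, hv]

end Aux8

end Paper
namespace Paper

section AuxMod

set_option synthInstance.maxHeartbeats 400000
set_option maxHeartbeats 1600000

variable {k : Type*} [Field k]
variable {B1 B2 V1 V2 : Type*}
  [AddCommMonoid B1] [AddCommMonoid B2] [AddCommMonoid V1] [AddCommMonoid V2]
  [Module k B1] [Module k B2] [Module k V1] [Module k V2]

/-- Abstract: the braided tensor product of two module actions is a module action. -/
theorem act_module (m1 : B1 ⊗[k] B1 →ₗ[k] B1) (m2 : B2 ⊗[k] B2 →ₗ[k] B2)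
    (a1 : B1 ⊗[k] V1 →ₗ[k] V1) (a2 : B2 ⊗[k] V2 →ₗ[k] V2)
    (t : B2 ⊗[k] V1 →ₗ[k] V1 ⊗[k] B2) (cb : B2 ⊗[k] B1 →ₗ[k] B1 ⊗[k] B2)
    (hA1 : ∀ (x : B1 ⊗[k] B1) (v : V1), a1 (m1 x ⊗ₜ[k] v)
        = a1 (a1.lTensor B1 ((TensorProduct.assoc k B1 B1 V1) (x ⊗ₜ[k] v))))
    (hA2 : ∀ (y : B2 ⊗[k] B2) (w : V2), a2 (m2 y ⊗ₜ[k] w)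
        = a2 (a2.lTensor B2 ((TensorProduct.assoc k B2 B2 V2) (y ⊗ₜ[k] w))))
    (hT : ∀ (y : B2 ⊗[k] B2) (v : V1), t (m2 y ⊗ₜ[k] v)
        = (m2.lTensor V1) (braidPast t t (y ⊗ₜ[k] v)))
    (hC : ∀ (b : B2) (x : B1 ⊗[k] V1), t (b ⊗ₜ[k] a1 x)
        = (a1.rTensor B2) ((TensorProduct.assoc k B1 V1 B2).symm
            ((t.lTensor B1) ((TensorProduct.assoc k B1 B2 V1)
              ((cb.rTensor V1) ((TensorProduct.assoc k B2 B1 V1).symm (b ⊗ₜ[k] x)))))))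
    (X Y : B1 ⊗[k] B2) (v : V1 ⊗[k] V2) :
    (TensorProduct.map a1 a2 ∘ₗ midMap t)
        ((TensorProduct.map m1 m2 ∘ₗ midMap cb) (X ⊗ₜ[k] Y) ⊗ₜ[k] v)
      = (TensorProduct.map a1 a2 ∘ₗ midMap t)
          (X ⊗ₜ[k] (TensorProduct.map a1 a2 ∘ₗ midMap t) (Y ⊗ₜ[k] v)) := by
  induction X using TensorProduct.induction_on with
  | zero => simp
  | tmul h h' =>
    induction Y using TensorProduct.induction_on with
    | zero => simp
    | tmul g g' =>
      induction v using TensorProduct.induction_on with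
      | zero => simp
      | tmul a b =>
        obtain ⟨Sz, hz⟩ := TensorProduct.exists_finset (cb (h' ⊗ₜ[k] g))
        obtain ⟨Sy, hy⟩ := TensorProduct.exists_finset (t (g' ⊗ₜ[k] a))
        simp only [LinearMap.comp_apply, midMap_tmul, hz, hy, hT, hC,
          braidPast_tmul, TensorProduct.sum_tmul, TensorProduct.tmul_sum, map_sum,
          TensorProduct.assoc_tmul, TensorProduct.assoc_symm_tmul,
          LinearMap.rTensor_tmul, LinearMap.lTensor_tmul, TensorProduct.map_tmul]
        rw [Finset.sum_comm]
        refine Finset.sum_congr rfl fun p _ => Finset.sum_congr rfl fun q _ => ?_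
        obtain ⟨Sw, hw⟩ := TensorProduct.exists_finset (t (q.2 ⊗ₜ[k] p.1))
        simp only [hw, TensorProduct.sum_tmul, TensorProduct.tmul_sum, map_sum,
          TensorProduct.assoc_tmul, TensorProduct.assoc_symm_tmul,
          LinearMap.rTensor_tmul, LinearMap.lTensor_tmul, TensorProduct.map_tmul,
          hA1, hA2]
      | add u w hu hw => simp only [map_add, tmul_add, add_tmul, hu, hw]
    | add u w hu hw => simp only [map_add, tmul_add, add_tmul, hu, hw]
  | add u w hu hw => simp only [map_add, tmul_add, add_tmul, hu, hw]

end AuxMod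

end Paper
namespace Paper

section Aux9

set_option synthInstance.maxHeartbeats 400000
set_option maxHeartbeats 1600000

variable {k : Type*} [Field k]
variable {H : Type*} [Ring H] [Algebra k H]
variable {A : Type*} [Ring A] [Algebra k A]
variable {comul : H →ₗ[k] H ⊗[k] H} {counit : H →ₗ[k] k}
variable {c : H ⊗[k] H ≃ₗ[k] H ⊗[k] H} {s : H ⊗[k] A ≃ₗ[k] A ⊗[k] H}
variable {ρ : H →ₐ[k] Module.End k A}

/-- `act2` is a module action of `(H ⊗_c H, mulB)`. -/
lemma act2_module (hs : IsBrTransposition k H A comul counit c s)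
    (hma : IsBrModuleAlgebra k H A comul counit c s ρ)
    (X Y : H ⊗[k] H) (w : A ⊗[k] A) :
    act2 s ρ (mulB k H c (X ⊗ₜ[k] Y) ⊗ₜ[k] w)
      = act2 s ρ (X ⊗ₜ[k] act2 s ρ (Y ⊗ₜ[k] w)) := by
  have hT : ∀ (y : H ⊗[k] H) (v : A),
      s.toLinearMap (LinearMap.mul' k H y ⊗ₜ[k] v)
        = ((LinearMap.mul' k H).lTensor A)
            (braidPast s.toLinearMap s.toLinearMap (y ⊗ₜ[k] v)) := by
    intro y v; simpa using s_mul_H' hs y v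
  have hC : ∀ (b : H) (x : H ⊗[k] A),
      s.toLinearMap (b ⊗ₜ[k] brActMap k H A ρ x)
        = ((brActMap k H A ρ).rTensor H) ((TensorProduct.assoc k H A H).symm
            ((s.toLinearMap.lTensor H) ((TensorProduct.assoc k H H A)
              ((c.toLinearMap.rTensor A)
                ((TensorProduct.assoc k H H A).symm (b ⊗ₜ[k] x)))))) := by
    intro b x; simpa using compat_s' hma b x
  have := act_module (LinearMap.mul' k H) (LinearMap.mul' k H)
    (brActMap k H A ρ) (brActMap k H A ρ) s.toLinearMap c.toLinearMap
    pi_mul' pi_mul' hT hC X Y w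
  simpa only [act2, mulB] using this

/-- `act2` module property, alternate form. -/
lemma act2_module' (hs : IsBrTransposition k H A comul counit c s)
    (hma : IsBrModuleAlgebra k H A comul counit c s ρ)
    (y : (H ⊗[k] H) ⊗[k] (H ⊗[k] H)) (w : A ⊗[k] A) :
    act2 s ρ (mulB k H c y ⊗ₜ[k] w)
      = act2 s ρ ((act2 s ρ).lTensor (H ⊗[k] H)
          ((TensorProduct.assoc k (H ⊗[k] H) (H ⊗[k] H) (A ⊗[k] A)) (y ⊗ₜ[k] w))) := by
  induction y using TensorProduct.induction_on with
  | zero => simp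
  | tmul X Y => simpa using act2_module hs hma X Y w
  | add u v hu hv => simp only [map_add, add_tmul, hu, hv]

/-- M3 : `act3` is a module action of `(H ⊗_c H ⊗_c H, mulC)`. -/
lemma act3_module (hs : IsBrTransposition k H A comul counit c s)
    (hma : IsBrModuleAlgebra k H A comul counit c s ρ)
    (X Y : H ⊗[k] (H ⊗[k] H)) (v : A ⊗[k] (A ⊗[k] A)) :
    act3 s ρ (mulC k H c (X ⊗ₜ[k] Y) ⊗ₜ[k] v)
      = act3 s ρ (X ⊗ₜ[k] act3 s ρ (Y ⊗ₜ[k] v)) := by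
  have := act_module (LinearMap.mul' k H) (mulB k H c)
    (brActMap k H A ρ) (act2 s ρ)
    (braidPast s.toLinearMap s.toLinearMap) (braidPast c.toLinearMap c.toLinearMap)
    pi_mul' (act2_module' hs hma) (T_mulB hs) (T_compat_pi hma) X Y v
  simpa only [act3, mulC] using this

end Aux9

end Paper
set_option synthInstance.maxHeartbeats 400000
set_option maxHeartbeats 1600000

open Paper in
/-- A twisting element `F` based on a braided bialgebra `H`, satisfying
`(s ⊗ H)∘(H ⊗ s)(F ⊗ a) = a ⊗ F` on a left `H`-braided module algebra `(A, s)`, yields an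
associative unital multiplication `μ_A ∘ F_l` on `A`. -/
theorem statement_0 {k : Type*} [Field k]
    (H : Type*) [Ring H] [Algebra k H]
    (comul : H →ₗ[k] H ⊗[k] H) (counit : H →ₗ[k] k)
    (c : H ⊗[k] H ≃ₗ[k] H ⊗[k] H)
    (hbb : IsBraidedBialgebra k H comul counit c)
    (A : Type*) [Ring A] [Algebra k A]
    (s : H ⊗[k] A ≃ₗ[k] A ⊗[k] H)
    (hs : IsBrTransposition k H A comul counit c s)
    (ρ : H →ₐ[k] Module.End k A)
    (hma : IsBrModuleAlgebra k H A comul counit c s ρ)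
    (F : H ⊗[k] H)
    (hF : IsTwistingElement k H comul counit c F)
    (hsF : ∀ a : A, braidPast s.toLinearMap s.toLinearMap (F ⊗ₜ[k] a) = a ⊗ₜ[k] F) :
    -- the twisted multiplication of `A_F`
    let mulF : A → A → A := fun a b =>
      (LinearMap.mul' k A
        ∘ₗ TensorProduct.map (brActMap k H A ρ) (brActMap k H A ρ)
        ∘ₗ midMap s.toLinearMap) (F ⊗ₜ[k] (a ⊗ₜ[k] b))
    -- `A_F` is a unital associative algebra with unit `1_A`
    (∀ a : A, mulF 1 a = a) ∧ (∀ a : A, mulF a 1 = a)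
      ∧ ∀ a b d : A, mulF (mulF a b) d = mulF a (mulF b d) := by
  intro mulF
  have hmulF : ∀ a b : A,
      mulF a b = LinearMap.mul' k A (act2 s ρ (F ⊗ₜ[k] (a ⊗ₜ[k] b))) := by
    intro a b
    simp [mulF, act2]
  refine ⟨?_, ?_, ?_⟩
  · intro a
    rw [hmulF, unit_left' hs hma, hF.1]
    simp [show ρ 1 = 1 from map_one ρ, Module.End.one_apply]
  · intro a
    rw [hmulF, unit_right' hs hma, hF.2.1]
    simp [show ρ 1 = 1 from map_one ρ, Module.End.one_apply]
  · intro a b d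
    rw [hmulF, hmulF, hmulF, hmulF]
    rw [claimA hs hma F (act2 s ρ (F ⊗ₜ[k] (a ⊗ₜ[k] b))) d]
    rw [← act3_assoc_one hs F a b d]
    rw [← act3_module hs hma]
    rw [hF.2.2.1]
    rw [act3_module hs hma]
    have h1F : act3 s ρ (((1 : H) ⊗ₜ[k] F) ⊗ₜ[k] (a ⊗ₜ[k] (b ⊗ₜ[k] d)))
        = a ⊗ₜ[k] act2 s ρ (F ⊗ₜ[k] (b ⊗ₜ[k] d)) := by
      rw [act3_one_tensor, hsF a]
      simp
    rw [h1F, ← claimA2 hs hma F a (act2 s ρ (F ⊗ₜ[k] (b ⊗ₜ[k] d)))]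
end
end

section
/- Let A be a k-algebra and let ς, δ_1, δ_2 : A → A be k-linear maps. There exists a (necessarily unique) left H_q-module structure ρ : H_q⊗A → A on A with ρ(σ⊗a) = ς(a), ρ(D_1⊗a) = δ_1(a) and ρ(D_2⊗a) = δ_2(a) for all a ∈ A if and only if: (1) ς is bijective; (2) δ_1∘δ_2 = δ_2∘δ_1; (3) qς∘δ_i = δ_i∘ς for i = 1,2; and (4) if q ≠ 1 and q^l = 1, then δ_1^l = δ_2^l = 0. -/
open TensorProduct

noncomputable section
namespace Paper

variable {k : Type*} [Field k]

section Hq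

variable (k)
variable (H : Type*) [Ring H]

/-- Axiomatisation of the Hopf algebra `H_q`. -/
structure HqData [HopfAlgebra k H] (q : k) where
  D₁ : H
  D₂ : H
  σ : Hˣ
  D_comm : D₁ * D₂ = D₂ * D₁
  σD₁ : q • ((σ : H) * D₁) = D₁ * (σ : H)
  σD₂ : q • ((σ : H) * D₂) = D₂ * (σ : H)
  comul_D₁ : Coalgebra.comul (R := k) D₁ = D₁ ⊗ₜ[k] (σ : H) + 1 ⊗ₜ[k] D₁
  comul_D₂ : Coalgebra.comul (R := k) D₂ = D₂ ⊗ₜ[k] (1 : H) + (σ : H) ⊗ₜ[k] D₂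
  comul_σ : Coalgebra.comul (R := k) ((σ : H)) = (σ : H) ⊗ₜ[k] (σ : H)
  counit_D₁ : Coalgebra.counit (R := k) D₁ = 0
  counit_D₂ : Coalgebra.counit (R := k) D₂ = 0
  counit_σ : Coalgebra.counit (R := k) ((σ : H)) = 1
  basis_generic : (∀ l : ℕ, 2 ≤ l → ¬ IsPrimitiveRoot q l) →
      ∃ b : Module.Basis (ℤ × ℕ × ℕ) k H,
        ∀ i j m, b (i, j, m) = ((σ ^ i : Hˣ) : H) * D₁ ^ j * D₂ ^ m
  basis_root : ∀ l : ℕ, 2 ≤ l → IsPrimitiveRoot q l →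
      D₁ ^ l = 0 ∧ D₂ ^ l = 0 ∧
      ∃ b : Module.Basis (ℤ × Fin l × Fin l) k H,
        ∀ i j m, b (i, j, m) = ((σ ^ i : Hˣ) : H) * D₁ ^ (j : ℕ) * D₂ ^ (m : ℕ)

variable (A : Type*) [Ring A] [Algebra k A]

/-- A left transposition of a (standard, flip-braided) bialgebra `H` on an algebra `A`. -/
structure IsTransposition [HopfAlgebra k H] (s : H ⊗[k] A ≃ₗ[k] A ⊗[k] H) : Prop where
  unit_H : ∀ a : A, s ((1 : H) ⊗ₜ[k] a) = a ⊗ₜ[k] (1 : H)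
  mul_H : s.toLinearMap ∘ₗ (LinearMap.mul' k H).rTensor A
      = (LinearMap.mul' k H).lTensor A ∘ₗ braidPast s.toLinearMap s.toLinearMap
  counit_compat : (TensorProduct.rid k A).toLinearMap
        ∘ₗ (Coalgebra.counit (R := k) (A := H)).lTensor A ∘ₗ s.toLinearMap
      = (TensorProduct.lid k A).toLinearMap ∘ₗ (Coalgebra.counit (R := k) (A := H)).rTensor A
  comul_compat : (Coalgebra.comul (R := k) (A := H)).lTensor A ∘ₗ s.toLinearMap
      = braidPast s.toLinearMap s.toLinearMap ∘ₗ (Coalgebra.comul (R := k) (A := H)).rTensor A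
  unit_A : ∀ h : H, s (h ⊗ₜ[k] (1 : A)) = (1 : A) ⊗ₜ[k] h
  mul_A : s.toLinearMap ∘ₗ (LinearMap.mul' k A).lTensor H
      = (LinearMap.mul' k A).rTensor H ∘ₗ braidUnder s.toLinearMap s.toLinearMap
  braid_compat : braidPast s.toLinearMap s.toLinearMap
        ∘ₗ (TensorProduct.comm k H H).toLinearMap.rTensor A
      = (TensorProduct.comm k H H).toLinearMap.lTensor A
        ∘ₗ braidPast s.toLinearMap s.toLinearMap

/-- The action `H ⊗ A → A` attached to an algebra morphism `H →ₐ Module.End k A`. -/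
def actMap [HopfAlgebra k H] (ρ : H →ₐ[k] Module.End k A) : H ⊗[k] A →ₗ[k] A :=
  TensorProduct.lift ρ.toLinearMap

/-- `(A, s)` is a left `H`-braided module algebra via the action `ρ`
(braid of `H` = flip). -/
structure IsModuleAlgebra [HopfAlgebra k H] (s : H ⊗[k] A ≃ₗ[k] A ⊗[k] H)
    (ρ : H →ₐ[k] Module.End k A) : Prop where
  compat_s : s.toLinearMap ∘ₗ (actMap k H A ρ).lTensor H
        ∘ₗ (TensorProduct.assoc k H H A).toLinearMap
      = (actMap k H A ρ).rTensor H
        ∘ₗ (TensorProduct.assoc k H A H).symm.toLinearMap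
        ∘ₗ s.toLinearMap.lTensor H
        ∘ₗ (TensorProduct.assoc k H H A).toLinearMap
        ∘ₗ (TensorProduct.comm k H H).toLinearMap.rTensor A
  mul_act : ∀ (h : H) (a b : A), ρ h (a * b)
      = (LinearMap.mul' k A
          ∘ₗ TensorProduct.map (actMap k H A ρ) (actMap k H A ρ)
          ∘ₗ midMap s.toLinearMap)
        ((Coalgebra.comul (R := k) h) ⊗ₜ[k] (a ⊗ₜ[k] b))
  one_act : ∀ h : H, ρ h (1 : A) = Coalgebra.counit (R := k) h • (1 : A)

/-- `s` is a *good* transposition. -/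
def GoodTransposition {q : k} [HopfAlgebra k H] (hq : HqData k H q)
    (s : H ⊗[k] A ≃ₗ[k] A ⊗[k] H) : Prop :=
  ∀ a : A, braidPast s.toLinearMap s.toLinearMap ((hq.D₁ ⊗ₜ[k] hq.D₂) ⊗ₜ[k] a)
    = a ⊗ₜ[k] (hq.D₁ ⊗ₜ[k] hq.D₂)

end Hq


section Crossed

variable {G : Type*} [Group G] {V : Type*} [AddCommGroup V] [Module k V]

variable (G) in
/-- `f` is a normal 2-cocycle on `G` with values in `kˣ`. -/
structure IsCocycle (f : G → G → kˣ) : Prop where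
  one_left : ∀ g, f 1 g = 1
  one_right : ∀ g, f g 1 = 1
  cocycle : ∀ g h l, f g h * f (g * h) l = f g (h * l) * f h l

variable (A : Type*) [Ring A] [Algebra k A]

/-- Axiomatisation of the crossed product `S(V) #_f G`:  `A` is generated by a copy of `V`
(with commuting elements, generating a copy of the symmetric algebra) and elements `w g`,
and is free as a module over the symmetric part with basis `{w g}`. -/
structure CrossedProduct (ρV : Representation k G V) (f : G → G → kˣ) where
  ι : V →ₗ[k] A
  w : G → A
  w_one : w 1 = 1
  ι_comm : ∀ v v', ι v * ι v' = ι v' * ι v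
  w_ι : ∀ g v, w g * ι v = ι (ρV g v) * w g
  w_mul : ∀ g h, w g * w h = (f g h : k) • w (g * h)
  isBasis : ∀ {n : ℕ} (bV : Module.Basis (Fin n) k V),
      ∃ bA : Module.Basis ((Fin n → ℕ) × G) k A,
        ∀ d g, bA (d, g) = (List.ofFn fun i => ι (bV i) ^ d i).prod * w g

namespace CrossedProduct

variable {A} {ρV : Representation k G V} {f : G → G → kˣ}

/-- The product in `A` of the images of a list of elements of `V`. -/
def mon (cp : CrossedProduct A ρV f) (l : List V) : A := (l.map cp.ι).prod

/-- `v₁ ⋯ v_{j-1}` : the image of the prefix of a monomial. -/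
def pre (cp : CrossedProduct A ρV f) {m : ℕ} (v : Fin m → V) (j : Fin m) : A :=
  cp.mon ((List.ofFn v).take j)

/-- `v_{j+1} ⋯ v_m` : the image of the suffix of a monomial. -/
def suf (cp : CrossedProduct A ρV f) {m : ℕ} (v : Fin m → V) (j : Fin m) : A :=
  cp.mon ((List.ofFn v).drop (j + 1))

/-- The subalgebra `S(V)` of the crossed product. -/
def SV (cp : CrossedProduct A ρV f) : Subalgebra k A :=
  Algebra.adjoin k (Set.range cp.ι)

/-- The subalgebra `S(W)` of the crossed product, for a subspace `W ≤ V`. -/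
def SW (cp : CrossedProduct A ρV f) (W : Submodule k V) : Subalgebra k A :=
  Algebra.adjoin k (cp.ι '' (W : Set V))

end CrossedProduct

/-- A linear endomorphism of `V` is `k[G]`-linear if it commutes with the `G`-action. -/
def GLinear (ρV : Representation k G V) (φ : V →ₗ[k] V) : Prop :=
  ∀ g v, φ (ρV g v) = ρV g (φ v)

variable (G) in
/-- `χ : G → kˣ` is a group homomorphism. -/
def IsCharacter (χ : G → kˣ) : Prop := ∀ g h, χ (g * h) = χ g * χ h

section Defs

variable {H : Type*} [Ring H] [HopfAlgebra k H] {q : k}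
variable {ρV : Representation k G V} {f : G → G → kˣ}

/-- `s` is the (good) transposition of `H_q` on `A` associated with the automorphism `α`. -/
def AssocTransposition (hq : HqData k H q)
    (s : H ⊗[k] A ≃ₗ[k] A ⊗[k] H) (α : A ≃ₐ[k] A) : Prop :=
  IsTransposition k H A s ∧ GoodTransposition k H A hq s
    ∧ (∀ a : A, s (hq.D₁ ⊗ₜ[k] a) = α a ⊗ₜ[k] hq.D₁)
    ∧ (∀ a : A, s (hq.D₂ ⊗ₜ[k] a) = α.symm a ⊗ₜ[k] hq.D₂)

variable {A}

/-- `ς` is the endomorphism of `A` determined by `ς̂` and `χ_ς`. -/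
def SigmaDef (cp : CrossedProduct A ρV f) (ςhat : V →ₗ[k] V) (χς : G → kˣ)
    (ς : Module.End k A) : Prop :=
  ∀ (m : ℕ) (v : Fin m → V) (g : G),
    ς (cp.mon (List.ofFn v) * cp.w g)
      = (χς g : k) • (cp.mon (List.ofFn fun i => ςhat (v i)) * cp.w g)

/-- `δ₁` is determined by `δ̂₁`, `δ̄₁` via the `(α, ς)`-twisted Leibniz formula. -/
def Delta1Def (cp : CrossedProduct A ρV f) (α : A ≃ₐ[k] A) (ς : Module.End k A)
    (δhat : V →ₗ[k] A) (δbar : G → A) (δ : Module.End k A) : Prop :=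
  ∀ (m : ℕ) (v : Fin m → V) (g : G),
    δ (cp.mon (List.ofFn v) * cp.w g)
      = (∑ j : Fin m, α (cp.pre v j) * δhat (v j) * ς (cp.suf v j * cp.w g))
        + α (cp.mon (List.ofFn v)) * δbar g

/-- `δ₂` is determined by `δ̂₂`, `δ̄₂` via the `(ς ∘ α⁻¹, id)`-twisted Leibniz formula. -/
def Delta2Def (cp : CrossedProduct A ρV f) (α : A ≃ₐ[k] A) (ς : Module.End k A)
    (δhat : V →ₗ[k] A) (δbar : G → A) (δ : Module.End k A) : Prop :=
  ∀ (m : ℕ) (v : Fin m → V) (g : G),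
    δ (cp.mon (List.ofFn v) * cp.w g)
      = (∑ j : Fin m, ς (α.symm (cp.pre v j)) * δhat (v j) * (cp.suf v j * cp.w g))
        + ς (α.symm (cp.mon (List.ofFn v))) * δbar g

/-- There is an `H_q`-braided module algebra structure on `(A, s)` with the
prescribed values of the action on `V` and on the `w_g`. -/
def HasHqModuleStructure (hq : HqData k H q) (cp : CrossedProduct A ρV f)
    (s : H ⊗[k] A ≃ₗ[k] A ⊗[k] H) (ςhat : V →ₗ[k] V) (χς : G → kˣ)
    (δhat1 δhat2 : V →ₗ[k] A) (δbar1 δbar2 : G → A) : Prop :=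
  ∃ ρ : H →ₐ[k] Module.End k A, IsModuleAlgebra k H A s ρ
    ∧ (∀ v : V, ρ (hq.σ : H) (cp.ι v) = cp.ι (ςhat v))
    ∧ (∀ g : G, ρ (hq.σ : H) (cp.w g) = (χς g : k) • cp.w g)
    ∧ (∀ v : V, ρ hq.D₁ (cp.ι v) = δhat1 v)
    ∧ (∀ g : G, ρ hq.D₁ (cp.w g) = δbar1 g)
    ∧ (∀ v : V, ρ hq.D₂ (cp.ι v) = δhat2 v)
    ∧ (∀ g : G, ρ hq.D₂ (cp.w g) = δbar2 g)

end Defs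

end Crossed

end Paper


namespace Statement5Aux

variable {k : Type*} [Field k] {R : Type*} [Ring R] [Algebra k R]

lemma inv_comm (c : kˣ) (u : Rˣ) (d : R)
    (h : (c : k) • ((u : R) * d) = d * (u : R)) :
    ((c⁻¹ : kˣ) : k) • (((u⁻¹ : Rˣ) : R) * d) = d * ((u⁻¹ : Rˣ) : R) := by
  have h2 : (c : k) • (d * ((u⁻¹ : Rˣ) : R)) = ((u⁻¹ : Rˣ) : R) * d := by
    have := congrArg (fun x => ((u⁻¹ : Rˣ) : R) * x * ((u⁻¹ : Rˣ) : R)) h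
    simpa [mul_smul_comm, smul_mul_assoc, mul_assoc, Units.inv_mul_cancel_left,
      Units.mul_inv_cancel_left] using this
  rw [← h2, smul_smul]
  simp

lemma zpow_comm (c : kˣ) (u : Rˣ) (d : R)
    (h : (c : k) • ((u : R) * d) = d * (u : R)) (i : ℤ) :
    d * ((u ^ i : Rˣ) : R) = ((c ^ i : kˣ) : k) • (((u ^ i : Rˣ) : R) * d) := by
  induction i using Int.induction_on with
  | zero => simp
  | succ n ih =>
      have hstep : d * (u : R) = (c : k) • ((u : R) * d) := h.symm
      calc d * ((u ^ ((n : ℤ) + 1) : Rˣ) : R)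
          = (d * ((u ^ (n : ℤ) : Rˣ) : R)) * (u : R) := by
            rw [zpow_add_one, Units.val_mul, mul_assoc]
        _ = ((c ^ (n : ℤ) : kˣ) : k) • (((u ^ (n : ℤ) : Rˣ) : R) * (d * (u : R))) := by
            rw [ih, smul_mul_assoc, mul_assoc]
        _ = ((c ^ ((n : ℤ) + 1) : kˣ) : k) • (((u ^ ((n : ℤ) + 1) : Rˣ) : R) * d) := by
            rw [hstep, mul_smul_comm, smul_smul, zpow_add_one, zpow_add_one,
              Units.val_mul, Units.val_mul, mul_assoc]
  | pred n ih =>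
      have hstep : d * ((u⁻¹ : Rˣ) : R) = ((c⁻¹ : kˣ) : k) • (((u⁻¹ : Rˣ) : R) * d) :=
        (inv_comm c u d h).symm
      calc d * ((u ^ (-(n : ℤ) - 1) : Rˣ) : R)
          = (d * ((u ^ (-(n : ℤ)) : Rˣ) : R)) * ((u⁻¹ : Rˣ) : R) := by
            rw [zpow_sub_one, Units.val_mul, mul_assoc]
        _ = ((c ^ (-(n : ℤ)) : kˣ) : k) • (((u ^ (-(n : ℤ)) : Rˣ) : R)
              * (d * ((u⁻¹ : Rˣ) : R))) := by
            rw [ih, smul_mul_assoc, mul_assoc]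
        _ = ((c ^ (-(n : ℤ) - 1) : kˣ) : k) • (((u ^ (-(n : ℤ) - 1) : Rˣ) : R) * d) := by
            rw [hstep, mul_smul_comm, smul_smul, zpow_sub_one, zpow_sub_one,
              Units.val_mul, Units.val_mul, mul_assoc]

lemma pow_zpow_comm (c : kˣ) (u : Rˣ) (d : R)
    (h : (c : k) • ((u : R) * d) = d * (u : R)) (i : ℤ) (n : ℕ) :
    d ^ n * ((u ^ i : Rˣ) : R) = ((c ^ (i * n) : kˣ) : k) • (((u ^ i : Rˣ) : R) * d ^ n) := by
  induction n with
  | zero => simp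
  | succ n ih =>
      calc d ^ (n + 1) * ((u ^ i : Rˣ) : R)
          = d ^ n * (d * ((u ^ i : Rˣ) : R)) := by rw [pow_succ, mul_assoc]
        _ = ((c ^ i : kˣ) : k) • (d ^ n * ((u ^ i : Rˣ) : R) * d) := by
            rw [zpow_comm c u d h i, mul_smul_comm, mul_assoc]
        _ = ((c ^ (i * (n + 1)) : kˣ) : k) • (((u ^ i : Rˣ) : R) * d ^ (n + 1)) := by
            rw [ih, smul_mul_assoc, smul_smul, ← Units.val_mul, ← zpow_add, pow_succ,
              mul_assoc]
            ring_nf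

end Statement5Aux

namespace Statement5Aux

variable {k : Type*} [Field k] {R : Type*} [Ring R] [Algebra k R]

lemma mono_zpow_comm (c : kˣ) (u : Rˣ) (d₁ d₂ : R)
    (h1 : (c : k) • ((u : R) * d₁) = d₁ * (u : R))
    (h2 : (c : k) • ((u : R) * d₂) = d₂ * (u : R)) (i : ℤ) (j m : ℕ) :
    (d₁ ^ j * d₂ ^ m) * ((u ^ i : Rˣ) : R)
      = ((c ^ (i * (j + m : ℕ)) : kˣ) : k) • (((u ^ i : Rˣ) : R) * (d₁ ^ j * d₂ ^ m)) := by
  calc (d₁ ^ j * d₂ ^ m) * ((u ^ i : Rˣ) : R)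
      = d₁ ^ j * (d₂ ^ m * ((u ^ i : Rˣ) : R)) := by rw [mul_assoc]
    _ = ((c ^ (i * m) : kˣ) : k) • ((d₁ ^ j * ((u ^ i : Rˣ) : R)) * d₂ ^ m) := by
        rw [pow_zpow_comm c u d₂ h2 i m, mul_smul_comm, mul_assoc]
    _ = ((c ^ (i * m) : kˣ) : k) • (((c ^ (i * j) : kˣ) : k)
          • (((u ^ i : Rˣ) : R) * d₁ ^ j * d₂ ^ m)) := by
        rw [pow_zpow_comm c u d₁ h1 i j, smul_mul_assoc]
    _ = ((c ^ (i * (j + m : ℕ)) : kˣ) : k) • (((u ^ i : Rˣ) : R) * (d₁ ^ j * d₂ ^ m)) := by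
        rw [smul_smul, ← Units.val_mul, ← zpow_add, mul_assoc]
        congr 2
        push_cast
        ring

lemma mono_mono (c : kˣ) (u : Rˣ) (d₁ d₂ : R) (hcomm : d₁ * d₂ = d₂ * d₁)
    (h1 : (c : k) • ((u : R) * d₁) = d₁ * (u : R))
    (h2 : (c : k) • ((u : R) * d₂) = d₂ * (u : R))
    (i i' : ℤ) (j m j' m' : ℕ) :
    (((u ^ i : Rˣ) : R) * d₁ ^ j * d₂ ^ m) * (((u ^ i' : Rˣ) : R) * d₁ ^ j' * d₂ ^ m')
      = ((c ^ (i' * (j + m : ℕ)) : kˣ) : k)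
          • (((u ^ (i + i') : Rˣ) : R) * d₁ ^ (j + j') * d₂ ^ (m + m')) := by
  have hdd : (d₁ ^ j * d₂ ^ m) * (d₁ ^ j' * d₂ ^ m') = d₁ ^ (j + j') * d₂ ^ (m + m') := by
    have hc : Commute d₂ d₁ := hcomm.symm
    calc (d₁ ^ j * d₂ ^ m) * (d₁ ^ j' * d₂ ^ m')
        = d₁ ^ j * ((d₂ ^ m * d₁ ^ j') * d₂ ^ m') := by rw [mul_assoc, mul_assoc]
      _ = d₁ ^ j * (d₁ ^ j' * (d₂ ^ m * d₂ ^ m')) := by rw [hc.pow_pow, mul_assoc]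
      _ = d₁ ^ (j + j') * d₂ ^ (m + m') := by rw [← mul_assoc, ← pow_add, ← pow_add]
  calc (((u ^ i : Rˣ) : R) * d₁ ^ j * d₂ ^ m) * (((u ^ i' : Rˣ) : R) * d₁ ^ j' * d₂ ^ m')
      = ((u ^ i : Rˣ) : R) * (((d₁ ^ j * d₂ ^ m) * ((u ^ i' : Rˣ) : R))
          * (d₁ ^ j' * d₂ ^ m')) := by
        simp only [mul_assoc]
    _ = ((c ^ (i' * (j + m : ℕ)) : kˣ) : k) • (((u ^ i : Rˣ) : R) * (((u ^ i' : Rˣ) : R)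
          * ((d₁ ^ j * d₂ ^ m) * (d₁ ^ j' * d₂ ^ m')))) := by
        rw [mono_zpow_comm c u d₁ d₂ h1 h2 i' j m, smul_mul_assoc, mul_smul_comm,
          mul_assoc]
    _ = ((c ^ (i' * (j + m : ℕ)) : kˣ) : k)
          • (((u ^ (i + i') : Rˣ) : R) * d₁ ^ (j + j') * d₂ ^ (m + m')) := by
        rw [hdd, ← mul_assoc, ← Units.val_mul, ← zpow_add, mul_assoc]

end Statement5Aux


open Paper in
theorem Statement5Aux.master {k : Type*} [Field k] {q : k} (hq0 : q ≠ 0)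
    {H : Type*} [Ring H] [HopfAlgebra k H] (hq : HqData k H q)
    {A : Type*} [Ring A] [Algebra k A]
    (ς δ₁ δ₂ : Module.End k A)
    (u : (Module.End k A)ˣ) (hu : (u : Module.End k A) = ς)
    (hcomm : δ₁ * δ₂ = δ₂ * δ₁)
    (h1 : q • (ς * δ₁) = δ₁ * ς) (h2 : q • (ς * δ₂) = δ₂ * ς)
    {ι : Type*} (b : Module.Basis ι k H)
    (π : ι → ℤ × ℕ × ℕ)
    (hb : ∀ i, b i = ((hq.σ ^ (π i).1 : Hˣ) : H) * hq.D₁ ^ (π i).2.1 * hq.D₂ ^ (π i).2.2)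
    (F : H →ₗ[k] Module.End k A)
    (hF : ∀ (I : ℤ) (J M : ℕ),
      F (((hq.σ ^ I : Hˣ) : H) * hq.D₁ ^ J * hq.D₂ ^ M)
        = ((u ^ I : (Module.End k A)ˣ) : Module.End k A) * δ₁ ^ J * δ₂ ^ M) :
    ∃! ρ : H →ₐ[k] Module.End k A,
        (∀ a : A, ρ (hq.σ : H) a = ς a) ∧ (∀ a : A, ρ hq.D₁ a = δ₁ a)
          ∧ (∀ a : A, ρ hq.D₂ a = δ₂ a) := by
  classical
  set c : kˣ := Units.mk0 q hq0 with hc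
  have hcq : (c : k) = q := rfl
  have hH1 : (c : k) • ((hq.σ : H) * hq.D₁) = hq.D₁ * (hq.σ : H) := by
    rw [hcq]; exact hq.σD₁
  have hH2 : (c : k) • ((hq.σ : H) * hq.D₂) = hq.D₂ * (hq.σ : H) := by
    rw [hcq]; exact hq.σD₂
  have hA1 : (c : k) • ((u : Module.End k A) * δ₁) = δ₁ * (u : Module.End k A) := by
    rw [hcq, hu]; exact h1
  have hA2 : (c : k) • ((u : Module.End k A) * δ₂) = δ₂ * (u : Module.End k A) := by
    rw [hcq, hu]; exact h2
  have key : ∀ p p', F (b p * b p') = F (b p) * F (b p') := by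
    intro p p'
    rw [hb p, hb p']
    obtain ⟨i, j, m⟩ := π p
    obtain ⟨i', j', m'⟩ := π p'
    rw [Statement5Aux.mono_mono c hq.σ hq.D₁ hq.D₂ hq.D_comm hH1 hH2 i i' j m j' m',
      map_smul, hF, hF, hF,
      Statement5Aux.mono_mono c u δ₁ δ₂ hcomm hA1 hA2 i i' j m j' m']
  have key2 : ∀ p (y : H), F (b p * y) = F (b p) * F y := by
    intro p y
    have h : F ∘ₗ LinearMap.mulLeft k (b p) = LinearMap.mulLeft k (F (b p)) ∘ₗ F :=
      b.ext (fun p' => by simpa using key p p')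
    simpa using LinearMap.congr_fun h y
  have hmul : ∀ x y : H, F (x * y) = F x * F y := by
    intro x y
    have h : F ∘ₗ LinearMap.mulRight k y = LinearMap.mulRight k (F y) ∘ₗ F :=
      b.ext (fun p => by simpa using key2 p y)
    simpa using LinearMap.congr_fun h x
  have hone : F 1 = 1 := by simpa using hF 0 0 0
  have hσ : F (hq.σ : H) = (u : Module.End k A) := by simpa using hF 1 0 0
  have hD1 : F hq.D₁ = δ₁ := by simpa using hF 0 1 0
  have hD2 : F hq.D₂ = δ₂ := by simpa using hF 0 0 1
  refine ⟨AlgHom.ofLinearMap F hone hmul, ⟨?_, ?_, ?_⟩, ?_⟩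
  · intro a
    show F (hq.σ : H) a = ς a
    rw [hσ, hu]
  · intro a
    show F hq.D₁ a = δ₁ a
    rw [hD1]
  · intro a
    show F hq.D₂ a = δ₂ a
    rw [hD2]
  · rintro ρ' ⟨p1, p2, p3⟩
    have hσ' : ρ' (hq.σ : H) = ς := LinearMap.ext p1
    have hD1' : ρ' hq.D₁ = δ₁ := LinearMap.ext p2
    have hD2' : ρ' hq.D₂ = δ₂ := LinearMap.ext p3
    have hu' : Units.map (ρ' : H →* Module.End k A) hq.σ = u := by
      apply Units.ext
      show (ρ' : H →* Module.End k A) (hq.σ : H) = (u : Module.End k A)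
      rw [hu, ← hσ']
      rfl
    have hzp : ∀ i : ℤ, ρ' ((hq.σ ^ i : Hˣ) : H)
        = ((u ^ i : (Module.End k A)ˣ) : Module.End k A) := by
      intro i
      rw [← hu', ← map_zpow]
      rfl
    have hpt : ∀ p, ρ'.toLinearMap (b p) = F (b p) := by
      intro p
      rw [hb p]
      obtain ⟨i, j, m⟩ := π p
      show ρ' (((hq.σ ^ i : Hˣ) : H) * hq.D₁ ^ j * hq.D₂ ^ m) = _
      rw [map_mul, map_mul, map_pow, map_pow, hzp, hD1', hD2', hF]
    have heq : ρ'.toLinearMap = F := b.ext hpt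
    exact AlgHom.ext fun x => LinearMap.congr_fun heq x

open Paper in
/-- Characterisation of the (necessarily unique) `H_q`-module structures
on `A` with prescribed action of `σ`, `D₁`, `D₂`. -/
theorem statement_5 {k : Type*} [Field k] {q : k} (hq0 : q ≠ 0)
    {H : Type*} [Ring H] [HopfAlgebra k H] (hq : HqData k H q)
    {A : Type*} [Ring A] [Algebra k A]
    (ς δ₁ δ₂ : Module.End k A) :
    (∃! ρ : H →ₐ[k] Module.End k A,
        (∀ a : A, ρ (hq.σ : H) a = ς a) ∧ (∀ a : A, ρ hq.D₁ a = δ₁ a)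
          ∧ (∀ a : A, ρ hq.D₂ a = δ₂ a))
    ↔ (Function.Bijective ς
        ∧ δ₁ ∘ₗ δ₂ = δ₂ ∘ₗ δ₁
        ∧ q • (ς ∘ₗ δ₁) = δ₁ ∘ₗ ς
        ∧ q • (ς ∘ₗ δ₂) = δ₂ ∘ₗ ς
        ∧ ∀ l : ℕ, 2 ≤ l → IsPrimitiveRoot q l → δ₁ ^ l = 0 ∧ δ₂ ^ l = 0) := by
  constructor
  · rintro ⟨ρ, ⟨p1, p2, p3⟩, -⟩
    have hσ : ρ (hq.σ : H) = ς := LinearMap.ext p1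
    have hD1 : ρ hq.D₁ = δ₁ := LinearMap.ext p2
    have hD2 : ρ hq.D₂ = δ₂ := LinearMap.ext p3
    refine ⟨?_, ?_, ?_, ?_, ?_⟩
    · rw [← Module.End.isUnit_iff, ← hσ]
      exact ⟨Units.map (ρ : H →* Module.End k A) hq.σ, rfl⟩
    · rw [← Module.End.mul_eq_comp, ← Module.End.mul_eq_comp, ← hD1, ← hD2,
        ← map_mul, ← map_mul, hq.D_comm]
    · rw [← Module.End.mul_eq_comp, ← Module.End.mul_eq_comp, ← hσ, ← hD1,
        ← map_mul, ← map_mul, ← map_smul, hq.σD₁]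
    · rw [← Module.End.mul_eq_comp, ← Module.End.mul_eq_comp, ← hσ, ← hD2,
        ← map_mul, ← map_mul, ← map_smul, hq.σD₂]
    · intro l hl hprim
      obtain ⟨e1, e2, -⟩ := hq.basis_root l hl hprim
      constructor
      · rw [← hD1, ← map_pow, e1, map_zero]
      · rw [← hD2, ← map_pow, e2, map_zero]
  · rintro ⟨hbij, hcomm, h1, h2, hroot⟩
    have hunit : IsUnit ς := (Module.End.isUnit_iff ς).mpr hbij
    set u : (Module.End k A)ˣ := hunit.unit with hudef
    have hu : (u : Module.End k A) = ς := hunit.unit_spec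
    rw [← Module.End.mul_eq_comp, ← Module.End.mul_eq_comp] at hcomm h1 h2
    by_cases hgen : ∀ l : ℕ, 2 ≤ l → ¬ IsPrimitiveRoot q l
    · obtain ⟨b, hb⟩ := hq.basis_generic hgen
      refine Statement5Aux.master hq0 hq ς δ₁ δ₂ u hu hcomm h1 h2 b id
        (fun p => hb p.1 p.2.1 p.2.2)
        (b.constr k (fun p => ((u ^ p.1 : (Module.End k A)ˣ) : Module.End k A)
          * δ₁ ^ p.2.1 * δ₂ ^ p.2.2)) ?_
      intro I J M
      rw [← hb I J M]
      exact b.constr_basis k _ (I, J, M)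
    · push_neg at hgen
      obtain ⟨l, hl, hprim⟩ := hgen
      obtain ⟨e1, e2, b, hb⟩ := hq.basis_root l hl hprim
      obtain ⟨z1, z2⟩ := hroot l hl hprim
      refine Statement5Aux.master hq0 hq ς δ₁ δ₂ u hu hcomm h1 h2 b
        (fun p => (p.1, (p.2.1 : ℕ), (p.2.2 : ℕ)))
        (fun p => hb p.1 p.2.1 p.2.2)
        (b.constr k (fun p => ((u ^ p.1 : (Module.End k A)ˣ) : Module.End k A)
          * δ₁ ^ (p.2.1 : ℕ) * δ₂ ^ (p.2.2 : ℕ))) ?_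
      intro I J M
      by_cases hJ : J < l
      · by_cases hM : M < l
        · rw [show hq.D₁ ^ J = hq.D₁ ^ ((⟨J, hJ⟩ : Fin l) : ℕ) from rfl,
            show hq.D₂ ^ M = hq.D₂ ^ ((⟨M, hM⟩ : Fin l) : ℕ) from rfl,
            ← hb I ⟨J, hJ⟩ ⟨M, hM⟩]
          exact b.constr_basis k _ (I, ⟨J, hJ⟩, ⟨M, hM⟩)
        · have hM' : l ≤ M := le_of_not_gt hM
          have hz : hq.D₂ ^ M = 0 := by
            rw [show M = l + (M - l) from (Nat.add_sub_cancel' hM').symm, pow_add, e2,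
              zero_mul]
          have hz' : δ₂ ^ M = 0 := by
            rw [show M = l + (M - l) from (Nat.add_sub_cancel' hM').symm, pow_add, z2,
              zero_mul]
          rw [hz, hz', mul_zero, mul_zero, map_zero]
      · have hJ' : l ≤ J := le_of_not_gt hJ
        have hz : hq.D₁ ^ J = 0 := by
          rw [show J = l + (J - l) from (Nat.add_sub_cancel' hJ').symm, pow_add, e1,
            zero_mul]
        have hz' : δ₁ ^ J = 0 := by
          rw [show J = l + (J - l) from (Nat.add_sub_cancel' hJ').symm, pow_add, z1,
            zero_mul]
        rw [hz, hz', mul_zero, zero_mul, mul_zero, zero_mul, map_zero]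
end
end
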